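/- arXiv:2202.09724 — 8 statements merged into one kernel-verified Lean document; each statement's English description precedes it below -/
import Mathlib

section
/- Generalized Neyman–Pearson lemma (equality constraints): Let ν be a σ-finite measure on a measurable space 𝒳 and let φ₀, φ₁, …, φ_m be ν-integrable real-valued functions. Fix constants c₁,…,c_m ∈ ℝ and t₁,…,t_m ∈ ℝ. Suppose f* : 𝒳 → [0,1] satisfies f*(x)=1 whenever φ₀(x) > Σᵢ cᵢ φᵢ(x) and f*(x)=0 whenever φ₀(x) < Σᵢ cᵢ φᵢ(x), and suppose ∫ f* φᵢ dν = tᵢ for all i=1,…,m. Then for every measurable f : 𝒳 → [0,1] with ∫ f φᵢ dν = tᵢ for all i, one has ∫ f φ₀ dν ≤ ∫ f* φ₀ dν. -/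
open MeasureTheory Set

theorem stmt_2 {X : Type*} [MeasurableSpace X] (ν : Measure X) [SigmaFinite ν]
    (m : ℕ) (φ0 : X → ℝ) (φ : Fin m → X → ℝ)
    (hφ0 : Integrable φ0 ν) (hφ : ∀ i, Integrable (φ i) ν)
    (c t : Fin m → ℝ)
    (fstar : X → ℝ) (hfm : Measurable fstar)
    (hf0 : ∀ x, 0 ≤ fstar x) (hf1 : ∀ x, fstar x ≤ 1)
    (hgt : ∀ x, (∑ i, c i * φ i x) < φ0 x → fstar x = 1)
    (hlt : ∀ x, φ0 x < (∑ i, c i * φ i x) → fstar x = 0)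
    (heq : ∀ i, ∫ x, fstar x * φ i x ∂ν = t i) :
    ∀ f : X → ℝ, Measurable f → (∀ x, 0 ≤ f x) → (∀ x, f x ≤ 1) →
      (∀ i, ∫ x, f x * φ i x ∂ν = t i) →
      ∫ x, f x * φ0 x ∂ν ≤ ∫ x, fstar x * φ0 x ∂ν := by
  intro f hfmeas hf0' hf1' hfeq
  -- bounded measurable times integrable is integrable
  have hint : ∀ (h : X → ℝ), Measurable h → (∀ x, |h x| ≤ 1) →
      ∀ ψ : X → ℝ, Integrable ψ ν → Integrable (fun x => h x * ψ x) ν := by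
    intro h hm hb ψ hψ
    exact hψ.bdd_mul hm.aestronglyMeasurable (c := 1) (Filter.Eventually.of_forall fun x => by simpa [Real.norm_eq_abs] using hb x)
  have hbs : ∀ x, |fstar x| ≤ 1 := fun x => abs_le.mpr ⟨by linarith [hf0 x], hf1 x⟩
  have hbf : ∀ x, |f x| ≤ 1 := fun x => abs_le.mpr ⟨by linarith [hf0' x], hf1' x⟩
  have hi1 : Integrable (fun x => fstar x * φ0 x) ν := hint _ hfm hbs _ hφ0
  have hi2 : Integrable (fun x => f x * φ0 x) ν := hint _ hfmeas hbf _ hφ0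
  have hi3 : ∀ i, Integrable (fun x => fstar x * φ i x) ν := fun i => hint _ hfm hbs _ (hφ i)
  have hi4 : ∀ i, Integrable (fun x => f x * φ i x) ν := fun i => hint _ hfmeas hbf _ (hφ i)
  set Φ : X → ℝ := fun x => φ0 x - ∑ i, c i * φ i x with hΦ
  have hΦint : Integrable Φ ν := by
    apply hφ0.sub
    exact integrable_finset_sum _ (fun i _ => (hφ i).const_mul (c i))
  have hDb : ∀ x, |fstar x - f x| ≤ 2 := by
    intro x
    have := hbs x; have := hbf x
    rw [abs_le] at *
    constructor <;> linarith [this.1, this.2]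
  have hDint : Integrable (fun x => (fstar x - f x) * Φ x) ν :=
    hΦint.bdd_mul (hfm.sub hfmeas).aestronglyMeasurable (c := 2) (Filter.Eventually.of_forall fun x => by simpa [Real.norm_eq_abs] using hDb x)
  have hnonneg : 0 ≤ ∫ x, (fstar x - f x) * Φ x ∂ν := by
    apply integral_nonneg
    intro x
    simp only [Pi.zero_apply]
    rcases lt_trichotomy (φ0 x) (∑ i, c i * φ i x) with h | h | h
    · have h1 := hlt x h
      have : Φ x ≤ 0 := by simp [hΦ]; linarith
      have : fstar x - f x ≤ 0 := by rw [h1]; linarith [hf0' x]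
      nlinarith [mul_nonneg (neg_nonneg.mpr ‹fstar x - f x ≤ 0›) (neg_nonneg.mpr ‹Φ x ≤ 0›)]
    · have : Φ x = 0 := by simp [hΦ, h]
      simp [this]
    · have h1 := hgt x h
      have : 0 ≤ Φ x := by simp [hΦ]; linarith
      have : 0 ≤ fstar x - f x := by rw [h1]; linarith [hf1' x]
      exact mul_nonneg ‹0 ≤ fstar x - f x› ‹0 ≤ Φ x›
  have hexp : ∫ x, (fstar x - f x) * Φ x ∂ν =
      (∫ x, fstar x * φ0 x ∂ν - ∫ x, f x * φ0 x ∂ν)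
        - ∑ i, c i * ((∫ x, fstar x * φ i x ∂ν) - ∫ x, f x * φ i x ∂ν) := by
    have hA : Integrable (fun x => fstar x * φ0 x - f x * φ0 x) ν := hi1.sub hi2
    have hBi : ∀ i : Fin m, Integrable (fun x => c i * (fstar x * φ i x - f x * φ i x)) ν :=
      fun i => ((hi3 i).sub (hi4 i)).const_mul (c i)
    have hB : Integrable (fun x => ∑ i, c i * (fstar x * φ i x - f x * φ i x)) ν :=
      integrable_finset_sum _ (fun i _ => hBi i)
    have h1 : (fun x => (fstar x - f x) * Φ x) =
        fun x => (fstar x * φ0 x - f x * φ0 x)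
          - ∑ i, c i * (fstar x * φ i x - f x * φ i x) := by
      funext x
      have e1 : fstar x * ∑ i, c i * φ i x = ∑ i, c i * (fstar x * φ i x) := by
        rw [Finset.mul_sum]; exact Finset.sum_congr rfl fun i _ => by ring
      have e2 : f x * ∑ i, c i * φ i x = ∑ i, c i * (f x * φ i x) := by
        rw [Finset.mul_sum]; exact Finset.sum_congr rfl fun i _ => by ring
      have : (fstar x - f x) * Φ x
          = (fstar x * φ0 x - f x * φ0 x)
            - (fstar x * ∑ i, c i * φ i x - f x * ∑ i, c i * φ i x) := by
        simp only [hΦ]; ring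
      rw [this, e1, e2, ← Finset.sum_sub_distrib]
      congr 1
      exact Finset.sum_congr rfl fun i _ => by ring
    rw [h1, integral_sub hA hB, integral_sub hi1 hi2,
      integral_finset_sum _ (fun i _ => hBi i)]
    congr 1
    apply Finset.sum_congr rfl
    intro i _
    rw [integral_const_mul, integral_sub (hi3 i) (hi4 i)]
  rw [hexp] at hnonneg
  have hz : ∑ i, c i * ((∫ x, fstar x * φ i x ∂ν) - ∫ x, f x * φ i x ∂ν) = 0 := by
    apply Finset.sum_eq_zero
    intro i _
    rw [heq i, hfeq i]
    ring
  rw [hz] at hnonneg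
  linarith
end

section
/- Generalized Neyman–Pearson lemma (inequality constraints): Under the setting of the generalized Neyman–Pearson lemma, if additionally cᵢ ≥ 0 for all i = 1,…,m, then f* maximizes ∫ f φ₀ dν over the larger class of all measurable f : 𝒳 → [0,1] satisfying the inequality constraints ∫ f φᵢ dν ≤ tᵢ for all i = 1,…,m. -/
open MeasureTheory Set

theorem stmt_3 {X : Type*} [MeasurableSpace X] (ν : Measure X) [SigmaFinite ν]
    (m : ℕ) (φ0 : X → ℝ) (φ : Fin m → X → ℝ)
    (hφ0 : Integrable φ0 ν) (hφ : ∀ i, Integrable (φ i) ν)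
    (c t : Fin m → ℝ) (hc : ∀ i, 0 ≤ c i)
    (fstar : X → ℝ) (hfm : Measurable fstar)
    (hf0 : ∀ x, 0 ≤ fstar x) (hf1 : ∀ x, fstar x ≤ 1)
    (hgt : ∀ x, (∑ i, c i * φ i x) < φ0 x → fstar x = 1)
    (hlt : ∀ x, φ0 x < (∑ i, c i * φ i x) → fstar x = 0)
    (heq : ∀ i, ∫ x, fstar x * φ i x ∂ν = t i) :
    ∀ f : X → ℝ, Measurable f → (∀ x, 0 ≤ f x) → (∀ x, f x ≤ 1) →
      (∀ i, ∫ x, f x * φ i x ∂ν ≤ t i) →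
      ∫ x, f x * φ0 x ∂ν ≤ ∫ x, fstar x * φ0 x ∂ν := by
  intro f hfm' hf0' hf1' hle
  -- boundedness helper
  have hbd : ∀ (u : X → ℝ), Measurable u → (∀ x, |u x| ≤ 1) →
      ∀ g : X → ℝ, Integrable g ν → Integrable (fun x => u x * g x) ν := by
    intro u hu hub g hg
    exact hg.bdd_mul (c := 1) hu.aestronglyMeasurable (Filter.Eventually.of_forall fun x => by simpa [Real.norm_eq_abs] using hub x)
  have habs : ∀ x, |fstar x - f x| ≤ 1 := fun x => by
    rw [abs_le]; constructor <;> nlinarith [hf0 x, hf1 x, hf0' x, hf1' x]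
  have habs1 : ∀ x, |fstar x| ≤ 1 := fun x => by rw [abs_le]; constructor <;> nlinarith [hf0 x, hf1 x]
  have habs2 : ∀ x, |f x| ≤ 1 := fun x => by rw [abs_le]; constructor <;> nlinarith [hf0' x, hf1' x]
  have hgm : Measurable fun x => fstar x - f x := hfm.sub hfm'
  have hS : Integrable (fun x => ∑ i, c i * φ i x) ν :=
    integrable_finset_sum _ fun i _ => (hφ i).const_mul _
  -- pointwise nonnegativity
  have key : 0 ≤ ∫ x, (fstar x - f x) * (φ0 x - ∑ i, c i * φ i x) ∂ν := by
    apply integral_nonneg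
    intro x
    show (0:ℝ) ≤ (fstar x - f x) * (φ0 x - ∑ i, c i * φ i x)
    rcases lt_trichotomy (∑ i, c i * φ i x) (φ0 x) with h | h | h
    · have := hgt x h
      have h1 : 0 ≤ fstar x - f x := by rw [this]; linarith [hf1' x]
      exact mul_nonneg h1 (by linarith)
    · simp [h]
    · have := hlt x h
      have h1 : fstar x - f x ≤ 0 := by rw [this]; linarith [hf0' x]
      have h2 := mul_nonneg (by linarith : (0:ℝ) ≤ f x - fstar x) (by linarith : (0:ℝ) ≤ (∑ i, c i * φ i x) - φ0 x)
      nlinarith [h2]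
  -- split the integral
  have hI1 : Integrable (fun x => (fstar x - f x) * φ0 x) ν := hbd _ hgm habs _ hφ0
  have hI2 : Integrable (fun x => (fstar x - f x) * ∑ i, c i * φ i x) ν := hbd _ hgm habs _ hS
  have hIs : Integrable (fun x => fstar x * φ0 x) ν := hbd _ hfm habs1 _ hφ0
  have hIf : Integrable (fun x => f x * φ0 x) ν := hbd _ hfm' habs2 _ hφ0
  have hIsi : ∀ i, Integrable (fun x => fstar x * φ i x) ν := fun i => hbd _ hfm habs1 _ (hφ i)
  have hIfi : ∀ i, Integrable (fun x => f x * φ i x) ν := fun i => hbd _ hfm' habs2 _ (hφ i)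
  have e0 : ∫ x, (fstar x - f x) * (φ0 x - ∑ i, c i * φ i x) ∂ν
      = (∫ x, (fstar x - f x) * φ0 x ∂ν) - ∫ x, (fstar x - f x) * ∑ i, c i * φ i x ∂ν := by
    rw [← integral_sub hI1 hI2]
    congr 1; funext x; ring
  have e1 : ∫ x, (fstar x - f x) * φ0 x ∂ν
      = (∫ x, fstar x * φ0 x ∂ν) - ∫ x, f x * φ0 x ∂ν := by
    rw [← integral_sub hIs hIf]
    congr 1; funext x; ring
  have e2 : ∫ x, (fstar x - f x) * ∑ i, c i * φ i x ∂ν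
      = ∑ i, c i * ((∫ x, fstar x * φ i x ∂ν) - ∫ x, f x * φ i x ∂ν) := by
    have : (fun x => (fstar x - f x) * ∑ i, c i * φ i x)
        = fun x => ∑ i, c i * (fstar x * φ i x - f x * φ i x) := by
      funext x; rw [Finset.mul_sum]; apply Finset.sum_congr rfl; intro i _; ring
    rw [this, integral_finset_sum]
    · apply Finset.sum_congr rfl; intro i _
      rw [MeasureTheory.integral_const_mul, integral_sub (hIsi i) (hIfi i)]
    · intro i _
      exact (((hIsi i).sub (hIfi i)).const_mul _)
  rw [e0, e1, e2] at key
  have hsum : 0 ≤ ∑ i, c i * ((∫ x, fstar x * φ i x ∂ν) - ∫ x, f x * φ i x ∂ν) := by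
    apply Finset.sum_nonneg
    intro i _
    have := hle i
    rw [heq i]
    exact mul_nonneg (hc i) (by linarith)
  linarith
end

section
/- With the same setting, the predictive-equality difference DPE(f) = P(Ŷ_f=1 | A=1, Y=0) − P(Ŷ_f=1 | A=0, Y=0) of any randomized classifier f equals ∫ f(x,a) · ((2a−1)(1−η_a(x))/(p_a (1−p_{Y,a}))) dP_{X,A}(x,a). -/
open MeasureTheory Set
open scoped NNReal ENNReal

theorem stmt_6 {X : Type*} [MeasurableSpace X]
    (μ : Measure (X × Bool)) [IsProbabilityMeasure μ]
    (ν : Bool → Measure X) (hνp : ∀ a, IsProbabilityMeasure (ν a))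
    (νY0 : Bool → Measure X)
    (η : Bool → X → ℝ) (hη : ∀ a, Measurable (η a))
    (hη0 : ∀ a x, 0 ≤ η a x) (hη1 : ∀ a x, η a x ≤ 1)
    (p pY : Bool → ℝ) (hp : ∀ a, 0 < p a) (hpY0 : ∀ a, 0 < pY a) (hpY1 : ∀ a, pY a < 1)
    (hpdef : ∀ a, p a = (μ {q : X × Bool | q.2 = a}).toReal)
    (hpYdef : ∀ a, ∫ x, η a x ∂(ν a) = pY a)
    (hlink : ∀ (a : Bool) (g : X → ℝ), Measurable g → Integrable g (ν a) →
      ∫ q in {q : X × Bool | q.2 = a}, g q.1 ∂μ = p a * ∫ x, g x ∂(ν a))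
    (hRN : ∀ a, νY0 a = (ν a).withDensity (fun x => ENNReal.ofReal ((1 - η a x) / (1 - pY a))))
    (f : X × Bool → ℝ) (hf : Measurable f) (hf0 : ∀ q, 0 ≤ f q) (hf1 : ∀ q, f q ≤ 1) :
    (∫ x, f (x, true) ∂(νY0 true)) - (∫ x, f (x, false) ∂(νY0 false)) =
      ∫ q, f q * ((if q.2 then (1:ℝ) else -1) * (1 - η q.2 q.1) / (p q.2 * (1 - pY q.2))) ∂μ := by
  -- weight function
  set w : Bool → X → ℝ := fun a x => (1 - η a x) / (1 - pY a) with hw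
  have hw0 : ∀ a x, 0 ≤ w a x := fun a x =>
    div_nonneg (by linarith [hη1 a x]) (by linarith [hpY1 a])
  have hwmeas : ∀ a, Measurable (w a) := fun a => (measurable_const.sub (hη a)).div_const _
  -- LHS terms: ∫ f(x,a) dνY0 a = ∫ f(x,a) * w a x dν a
  have hL : ∀ a, (∫ x, f (x, a) ∂(νY0 a)) = ∫ x, f (x, a) * w a x ∂(ν a) := by
    intro a
    rw [hRN a]
    have : (fun x => ENNReal.ofReal (w a x)) = fun x => ((fun x => (w a x).toNNReal) x : ℝ≥0∞) := rfl
    rw [this, integral_withDensity_eq_integral_smul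
      ((hwmeas a).real_toNNReal) (fun x => f (x, a))]
    congr 1
    ext x
    rw [NNReal.smul_def, Real.coe_toNNReal _ (hw0 a x), smul_eq_mul, mul_comm]
  -- integrability of f(·,a)*w a over ν a : bounded measurable
  have hfm : ∀ a : Bool, Measurable (fun x => f (x, a)) := fun a =>
    hf.comp (measurable_id.prodMk measurable_const)
  have hInt : ∀ a, Integrable (fun x => f (x, a) * w a x / p a) (ν a) := by
    intro a
    have := hνp a
    apply Integrable.mono' (g := fun _ => (1 / (1 - pY a)) / p a) (integrable_const _)
      (((hfm a).mul (hwmeas a)).div_const _).aestronglyMeasurable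
    filter_upwards with x
    have h1 : 0 ≤ 1 - η a x := by linarith [hη1 a x]
    have h2 : (0:ℝ) < 1 - pY a := by linarith [hpY1 a]
    have hfx := hf0 (x, a)
    have hfx1 := hf1 (x, a)
    have hwle : w a x ≤ 1 / (1 - pY a) := by
      show (1 - η a x) / (1 - pY a) ≤ 1 / (1 - pY a)
      gcongr
      linarith [hη0 a x]
    rw [Real.norm_eq_abs]
    show |f (x, a) * w a x / p a| ≤ 1 / (1 - pY a) / p a
    rw [abs_of_nonneg (div_nonneg (mul_nonneg hfx (hw0 a x)) (hp a).le)]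
    rw [div_le_div_iff_of_pos_right (hp a)]
    calc f (x, a) * w a x ≤ 1 * (1 / (1 - pY a)) :=
          mul_le_mul hfx1 hwle (hw0 a x) zero_le_one
      _ = 1 / (1 - pY a) := one_mul _
  -- Now the RHS
  set g : X × Bool → ℝ := fun q => f q * ((if q.2 then (1:ℝ) else -1) * (1 - η q.2 q.1) / (p q.2 * (1 - pY q.2))) with hg
  have hst : MeasurableSet {q : X × Bool | q.2 = true} :=
    measurable_snd (measurableSet_singleton true)
  have hcompl : {q : X × Bool | q.2 = true}ᶜ = {q : X × Bool | q.2 = false} := by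
    ext q; simp [Bool.not_eq_true]
  have hgmeas : Measurable g := by
    apply hf.mul
    apply measurable_from_prod_countable_left
    intro a
    dsimp only
    exact ((measurable_const (a := if a then (1:ℝ) else -1)).mul ((measurable_const (a := (1:ℝ))).sub (hη a))).div_const _
  -- set integrals
  have hset : ∀ a : Bool, ∫ q in {q : X × Bool | q.2 = a}, g q ∂μ
      = (if a then (1:ℝ) else -1) * ∫ x, f (x, a) * w a x ∂(ν a) := by
    intro a
    have hsa : MeasurableSet {q : X × Bool | q.2 = a} :=
      measurable_snd (measurableSet_singleton a)
    have hcongr : ∫ q in {q : X × Bool | q.2 = a}, g q ∂μ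
        = ∫ q in {q : X × Bool | q.2 = a},
            (fun x => (if a then (1:ℝ) else -1) * (f (x, a) * w a x / p a)) q.1 ∂μ := by
      apply setIntegral_congr_fun hsa
      intro q hq
      simp only [mem_setOf_eq] at hq
      simp only [hg, hw]
      rw [← hq]
      cases q with
      | mk x b =>
        simp only
        field_simp
    rw [hcongr, hlink a (fun x => (if a then (1:ℝ) else -1) * (f (x, a) * w a x / p a)) ((measurable_const.mul (((hfm a).mul (hwmeas a)).div_const _)))
        ((hInt a).const_mul _)]
    rw [integral_const_mul, integral_div]
    cases a <;> simp <;>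
      rw [mul_comm, div_mul_cancel₀ _ (hp _).ne']
  have hgInt : Integrable g μ := by
    apply Integrable.mono'
      (g := fun _ => max (1 / (p true * (1 - pY true))) (1 / (p false * (1 - pY false))))
      (integrable_const _) hgmeas.aestronglyMeasurable
    filter_upwards with q
    have hb : ∀ a : Bool, (0:ℝ) < p a * (1 - pY a) := fun a =>
      mul_pos (hp a) (by linarith [hpY1 a])
    have key : ∀ q : X × Bool, |g q| ≤ 1 / (p q.2 * (1 - pY q.2)) := by
      intro q
      have h1 : 0 ≤ 1 - η q.2 q.1 := by linarith [hη1 q.2 q.1]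
      have h1' : 1 - η q.2 q.1 ≤ 1 := by linarith [hη0 q.2 q.1]
      have habs : |(if q.2 then (1:ℝ) else -1)| = 1 := by cases q.2 <;> simp
      rw [hg]
      simp only
      rw [abs_mul, abs_div, abs_mul, habs, one_mul,
        abs_of_nonneg h1, abs_of_nonneg (hb q.2).le]
      calc |f q| * ((1 - η q.2 q.1) / (p q.2 * (1 - pY q.2)))
          ≤ 1 * (1 / (p q.2 * (1 - pY q.2))) := by
            apply mul_le_mul (abs_le.mpr ⟨by linarith [hf0 q], hf1 q⟩) ?_
              (div_nonneg h1 (hb q.2).le) zero_le_one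
            rw [div_le_div_iff_of_pos_right (hb q.2)]
            exact h1'
        _ = 1 / (p q.2 * (1 - pY q.2)) := one_mul _
    rw [Real.norm_eq_abs]
    refine (key q).trans ?_
    cases q.2
    · exact le_max_right _ _
    · exact le_max_left _ _
  have hsplit : ∫ q, g q ∂μ
      = (∫ q in {q : X × Bool | q.2 = true}, g q ∂μ)
        + ∫ q in {q : X × Bool | q.2 = false}, g q ∂μ := by
    rw [← hcompl, integral_add_compl hst hgInt]
  show _ = ∫ q, g q ∂μ
  rw [hsplit, hset true, hset false, hL true, hL false]
  simp
  ring
end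

section
/- With the same setting, the overall-accuracy-equality difference DOA(f) = [P(Ŷ_f=1|A=1,Y=1) + P(Ŷ_f=0|A=1,Y=0)] − [P(Ŷ_f=1|A=0,Y=1) + P(Ŷ_f=0|A=0,Y=0)] of a randomized classifier f equals ∫ f(x,a) · ((2a−1)/p_a) · (η_a(x)/p_{Y,a} − (1−η_a(x))/(1−p_{Y,a})) dP_{X,A}(x,a). -/
open MeasureTheory Set

private lemma int_wd {X : Type*} [MeasurableSpace X] (ν : Measure X) (d : X → ℝ)
    (hd : Measurable d) (hd0 : ∀ x, 0 ≤ d x) (g : X → ℝ) :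
    ∫ x, g x ∂(ν.withDensity fun x => ENNReal.ofReal (d x)) = ∫ x, d x * g x ∂ν := by
  have h : (fun x => ENNReal.ofReal (d x)) = fun x => ((d x).toNNReal : ENNReal) := rfl
  rw [h, integral_withDensity_eq_integral_smul hd.real_toNNReal]
  congr 1; funext x
  simp [NNReal.smul_def, Real.coe_toNNReal _ (hd0 x)]

private lemma integrable_of_bdd {α : Type*} [MeasurableSpace α] (m : Measure α)
    [IsFiniteMeasure m] {g : α → ℝ} (hg : Measurable g) (C : ℝ) (h : ∀ x, |g x| ≤ C) :
    Integrable g m :=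
  (integrable_const C).mono' hg.aestronglyMeasurable (ae_of_all _ (fun x => by
    simpa [Real.norm_eq_abs] using h x))

theorem stmt_7 {X : Type*} [MeasurableSpace X]
    (μ : Measure (X × Bool)) [IsProbabilityMeasure μ]
    (ν : Bool → Measure X) (hνp : ∀ a, IsProbabilityMeasure (ν a))
    (νY1 νY0 : Bool → Measure X)
    (η : Bool → X → ℝ) (hη : ∀ a, Measurable (η a))
    (hη0 : ∀ a x, 0 ≤ η a x) (hη1 : ∀ a x, η a x ≤ 1)
    (p pY : Bool → ℝ) (hp : ∀ a, 0 < p a) (hpY0 : ∀ a, 0 < pY a) (hpY1 : ∀ a, pY a < 1)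
    (hpdef : ∀ a, p a = (μ {q : X × Bool | q.2 = a}).toReal)
    (hpYdef : ∀ a, ∫ x, η a x ∂(ν a) = pY a)
    (hlink : ∀ (a : Bool) (g : X → ℝ), Measurable g → Integrable g (ν a) →
      ∫ q in {q : X × Bool | q.2 = a}, g q.1 ∂μ = p a * ∫ x, g x ∂(ν a))
    (hRN1 : ∀ a, νY1 a = (ν a).withDensity (fun x => ENNReal.ofReal (η a x / pY a)))
    (hRN0 : ∀ a, νY0 a = (ν a).withDensity (fun x => ENNReal.ofReal ((1 - η a x) / (1 - pY a))))
    (f : X × Bool → ℝ) (hf : Measurable f) (hf0 : ∀ q, 0 ≤ f q) (hf1 : ∀ q, f q ≤ 1) :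
    ((∫ x, f (x, true) ∂(νY1 true)) + (∫ x, (1 - f (x, true)) ∂(νY0 true))) -
      ((∫ x, f (x, false) ∂(νY1 false)) + (∫ x, (1 - f (x, false)) ∂(νY0 false))) =
      ∫ q, f q * ((if q.2 then (1:ℝ) else -1) / p q.2) *
        (η q.2 q.1 / pY q.2 - (1 - η q.2 q.1) / (1 - pY q.2)) ∂μ := by
  haveI := hνp
  -- basic facts
  have hpY1' : ∀ a, (0:ℝ) < 1 - pY a := fun a => by linarith [hpY1 a]
  set G : Bool → X → ℝ := fun a x =>
    f (x, a) * (η a x / pY a - (1 - η a x) / (1 - pY a)) with hG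
  have hfa : ∀ a : Bool, Measurable fun x => f (x, a) := fun a =>
    hf.comp (measurable_id.prodMk measurable_const)
  have hGm : ∀ a, Measurable (G a) := fun a =>
    (hfa a).mul (((hη a).div_const _).sub ((measurable_const.sub (hη a)).div_const _))
  have hCb : ∀ (a : Bool) (x : X), |G a x| ≤ 1 / pY a + 1 / (1 - pY a) := by
    intro a x
    have h1 : 0 ≤ η a x / pY a := div_nonneg (hη0 a x) (hpY0 a).le
    have h2 : η a x / pY a ≤ 1 / pY a := (div_le_div_iff_of_pos_right (hpY0 a)).2 (hη1 a x)
    have h3 : 0 ≤ (1 - η a x) / (1 - pY a) := div_nonneg (by linarith [hη1 a x]) (hpY1' a).le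
    have h4 : (1 - η a x) / (1 - pY a) ≤ 1 / (1 - pY a) :=
      (div_le_div_iff_of_pos_right (hpY1' a)).2 (by linarith [hη0 a x])
    have h5 := hf0 (x, a); have h6 := hf1 (x, a)
    rw [abs_mul]
    have : |f (x, a)| ≤ 1 := by rw [abs_le]; constructor <;> linarith
    calc |f (x,a)| * |η a x / pY a - (1 - η a x) / (1 - pY a)|
        ≤ 1 * (1 / pY a + 1 / (1 - pY a)) := by
          apply mul_le_mul this _ (abs_nonneg _) zero_le_one
          rw [abs_le]; constructor <;> linarith
      _ = 1 / pY a + 1 / (1 - pY a) := one_mul _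
  have hGint : ∀ a, Integrable (G a) (ν a) := fun a =>
    integrable_of_bdd _ (hGm a) _ (hCb a)
  -- per-group LHS computation
  have key : ∀ a : Bool,
      (∫ x, f (x, a) ∂(νY1 a)) + (∫ x, (1 - f (x, a)) ∂(νY0 a)) = 1 + ∫ x, G a x ∂(ν a) := by
    intro a
    have hu : ∫ x, f (x, a) ∂(νY1 a) = ∫ x, (η a x / pY a) * f (x, a) ∂(ν a) := by
      rw [hRN1 a]
      exact int_wd _ _ ((hη a).div_const _) (fun x => div_nonneg (hη0 a x) (hpY0 a).le) _
    have hv : ∫ x, (1 - f (x, a)) ∂(νY0 a)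
        = ∫ x, ((1 - η a x) / (1 - pY a)) * (1 - f (x, a)) ∂(ν a) := by
      rw [hRN0 a]
      exact int_wd _ _ ((measurable_const.sub (hη a)).div_const _)
        (fun x => div_nonneg (by show (0:ℝ) ≤ 1 - η a x; linarith [hη1 a x]) (hpY1' a).le) _
    -- integrability of pieces
    have hum : Measurable fun x => (η a x / pY a) * f (x, a) :=
      ((hη a).div_const _).mul (hfa a)
    have hvm : Measurable fun x => ((1 - η a x) / (1 - pY a)) * f (x, a) :=
      ((measurable_const.sub (hη a)).div_const _).mul (hfa a)
    have hvcm : Measurable fun x => (1 - η a x) / (1 - pY a) :=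
      (measurable_const.sub (hη a)).div_const _
    have hbd : ∀ x : X, |f (x, a)| ≤ 1 := fun x => by
      rw [abs_le]; exact ⟨by linarith [hf0 (x,a)], hf1 (x,a)⟩
    have hubd : ∀ x, |(η a x / pY a) * f (x, a)| ≤ 1 / pY a := by
      intro x
      rw [abs_mul]
      calc |η a x / pY a| * |f (x, a)| ≤ (1 / pY a) * 1 := by
            apply mul_le_mul _ (hbd x) (abs_nonneg _)
              (div_nonneg zero_le_one (hpY0 a).le)
            rw [abs_of_nonneg (div_nonneg (hη0 a x) (hpY0 a).le)]
            exact (div_le_div_iff_of_pos_right (hpY0 a)).2 (hη1 a x)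
        _ = 1 / pY a := mul_one _
    have hvbd : ∀ x, |((1 - η a x) / (1 - pY a)) * f (x, a)| ≤ 1 / (1 - pY a) := by
      intro x
      rw [abs_mul]
      calc |(1 - η a x) / (1 - pY a)| * |f (x, a)| ≤ (1 / (1 - pY a)) * 1 := by
            apply mul_le_mul _ (hbd x) (abs_nonneg _) (div_nonneg zero_le_one (hpY1' a).le)
            rw [abs_of_nonneg (div_nonneg (by linarith [hη1 a x]) (hpY1' a).le)]
            exact (div_le_div_iff_of_pos_right (hpY1' a)).2 (by linarith [hη0 a x])
        _ = 1 / (1 - pY a) := mul_one _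
    have hui : Integrable (fun x => (η a x / pY a) * f (x, a)) (ν a) :=
      integrable_of_bdd _ hum _ hubd
    have hvi : Integrable (fun x => ((1 - η a x) / (1 - pY a)) * f (x, a)) (ν a) :=
      integrable_of_bdd _ hvm _ hvbd
    have hvci : Integrable (fun x => (1 - η a x) / (1 - pY a)) (ν a) :=
      integrable_of_bdd _ hvcm (1 / (1 - pY a)) (fun x => by
        rw [abs_of_nonneg (div_nonneg (by linarith [hη1 a x]) (hpY1' a).le)]
        exact (div_le_div_iff_of_pos_right (hpY1' a)).2 (by linarith [hη0 a x]))
    -- ∫ (1-η)/(1-pY) = 1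
    have hηi : Integrable (η a) (ν a) :=
      integrable_of_bdd _ (hη a) 1 (fun x => abs_le.2 ⟨by linarith [hη0 a x], hη1 a x⟩)
    have hone : ∫ x, (1 - η a x) / (1 - pY a) ∂(ν a) = 1 := by
      rw [integral_div, integral_sub (integrable_const 1) hηi, hpYdef a]
      simp [div_self (hpY1' a).ne']
    -- expand second term
    have hsplit : ∫ x, ((1 - η a x) / (1 - pY a)) * (1 - f (x, a)) ∂(ν a)
        = 1 - ∫ x, ((1 - η a x) / (1 - pY a)) * f (x, a) ∂(ν a) := by
      have : (fun x => ((1 - η a x) / (1 - pY a)) * (1 - f (x, a)))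
          = fun x => (1 - η a x) / (1 - pY a) - ((1 - η a x) / (1 - pY a)) * f (x, a) := by
        funext x; ring
      rw [this, integral_sub hvci hvi, hone]
    have hGdiff : ∫ x, G a x ∂(ν a)
        = (∫ x, (η a x / pY a) * f (x, a) ∂(ν a))
          - ∫ x, ((1 - η a x) / (1 - pY a)) * f (x, a) ∂(ν a) := by
      rw [← integral_sub hui hvi]
      congr 1; funext x; simp only [hG]; ring
    rw [hu, hv, hsplit, hGdiff]; ring
  -- RHS computation
  set F : X × Bool → ℝ := fun q =>
    f q * ((if q.2 then (1:ℝ) else -1) / p q.2) *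
      (η q.2 q.1 / pY q.2 - (1 - η q.2 q.1) / (1 - pY q.2)) with hFdef
  have hFa : ∀ a : Bool, (fun x => F (x, a))
      = fun x => ((if a then (1:ℝ) else -1) / p a) * G a x := by
    intro a; funext x; simp only [hFdef, hG]; ring
  have hFm : Measurable F := by
    apply measurable_from_prod_countable_left
    intro a
    rw [hFa a]
    exact measurable_const.mul (hGm a)
  have hFbd : ∀ q, |F q| ≤
      max ((1 / p true) * (1 / pY true + 1 / (1 - pY true)))
          ((1 / p false) * (1 / pY false + 1 / (1 - pY false))) := by
    rintro ⟨x, a⟩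
    have h0 : |F (x, a)| ≤ (1 / p a) * (1 / pY a + 1 / (1 - pY a)) := by
      have := congrFun (hFa a) x
      rw [this, abs_mul, abs_div]
      have h1 : |if a then (1:ℝ) else -1| = 1 := by cases a <;> norm_num
      rw [h1, abs_of_pos (hp a)]
      exact mul_le_mul le_rfl (hCb a x) (abs_nonneg _) (div_nonneg zero_le_one (hp a).le)
    cases a
    · exact h0.trans (le_max_right _ _)
    · exact h0.trans (le_max_left _ _)
  have hFint : Integrable F μ := integrable_of_bdd _ hFm _ hFbd
  have hS : MeasurableSet {q : X × Bool | q.2 = true} :=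
    measurable_snd (measurableSet_singleton true)
  have hSc : {q : X × Bool | q.2 = true}ᶜ = {q : X × Bool | q.2 = false} := by
    ext q; simp
  have hsplitμ : ∫ q, F q ∂μ
      = (∫ q in {q : X × Bool | q.2 = true}, F q ∂μ)
        + ∫ q in {q : X × Bool | q.2 = false}, F q ∂μ := by
    rw [← hSc, integral_add_compl hS hFint]
  have hsetT : ∫ q in {q : X × Bool | q.2 = true}, F q ∂μ = ∫ x, G true x ∂(ν true) := by
    have hcg : ∀ q ∈ {q : X × Bool | q.2 = true},
        F q = (fun x => (1 / p true) * G true x) q.1 := by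
      rintro ⟨x, a⟩ hq
      simp only [mem_setOf_eq] at hq
      subst hq
      have := congrFun (hFa true) x
      simpa using this
    rw [setIntegral_congr_fun hS hcg,
      hlink true (fun x => (1 / p true) * G true x) (measurable_const.mul (hGm true)) ((hGint true).const_mul _),
      integral_const_mul]
    rw [div_mul_eq_mul_div, one_mul, mul_comm, div_mul_cancel₀ _ (hp true).ne']
  have hsetF : ∫ q in {q : X × Bool | q.2 = false}, F q ∂μ = -∫ x, G false x ∂(ν false) := by
    have hSf : MeasurableSet {q : X × Bool | q.2 = false} :=
      measurable_snd (measurableSet_singleton false)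
    have hcg : ∀ q ∈ {q : X × Bool | q.2 = false},
        F q = (fun x => (-1 / p false) * G false x) q.1 := by
      rintro ⟨x, a⟩ hq
      simp only [mem_setOf_eq] at hq
      subst hq
      have := congrFun (hFa false) x
      simpa using this
    rw [setIntegral_congr_fun hSf hcg,
      hlink false (fun x => (-1 / p false) * G false x) (measurable_const.mul (hGm false)) ((hGint false).const_mul _),
      integral_const_mul]
    rw [neg_div, neg_mul, mul_neg, div_mul_eq_mul_div, one_mul,
      mul_comm (p false), div_mul_cancel₀ _ (hp false).ne']
  calc ((∫ x, f (x, true) ∂(νY1 true)) + (∫ x, (1 - f (x, true)) ∂(νY0 true))) -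
      ((∫ x, f (x, false) ∂(νY1 false)) + (∫ x, (1 - f (x, false)) ∂(νY0 false)))
      = (1 + ∫ x, G true x ∂(ν true)) - (1 + ∫ x, G false x ∂(ν false)) := by
        rw [key true, key false]
    _ = (∫ x, G true x ∂(ν true)) + -∫ x, G false x ∂(ν false) := by ring
    _ = ∫ q, F q ∂μ := by rw [hsplitμ, hsetT, hsetF]
end

section
/- Existence of balanced group thresholds: Let a range over a finite set 𝒜 of size at least 2, let p_a > 0 for each a, and suppose that for each a ∈ 𝒜 the random variable η_a(X) (under P_{X|A=a}) has an atomless distribution. Then there exist real numbers (t_a)_{a∈𝒜} with Σ_{a∈𝒜} t_a = 0 such that the probabilities P_{X|A=a}(η_a(X) > 1/2 + t_a/(2p_a)) are equal for all a ∈ 𝒜. -/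
open MeasureTheory Set Filter

noncomputable def sf (μ : Measure ℝ) (t : ℝ) : ℝ := (μ (Ioi t)).toReal

lemma sf_anti (μ : Measure ℝ) [IsProbabilityMeasure μ] : Antitone (sf μ) := by
  intro s t hst
  exact ENNReal.toReal_mono (measure_ne_top μ _) (measure_mono (Ioi_subset_Ioi hst))

lemma sf_nonneg (μ : Measure ℝ) (t : ℝ) : 0 ≤ sf μ t := ENNReal.toReal_nonneg

lemma sf_le_one (μ : Measure ℝ) [IsProbabilityMeasure μ] (t : ℝ) : sf μ t ≤ 1 := by
  have := prob_le_one (μ := μ) (s := Ioi t)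
  simpa [sf] using ENNReal.toReal_mono (by simp) this

lemma sf_sub (μ : Measure ℝ) [IsProbabilityMeasure μ] {s t : ℝ} (h : s ≤ t) :
    sf μ s - sf μ t = (μ (Ioc s t)).toReal := by
  have hU : Ioc s t ∪ Ioi t = Ioi s := Ioc_union_Ioi_eq_Ioi h
  have hd : Disjoint (Ioc s t) (Ioi t) := by
    rw [Set.disjoint_left]
    rintro x ⟨_, hx2⟩ hx3
    exact absurd hx3 (not_lt.mpr hx2)
  have : μ (Ioi s) = μ (Ioc s t) + μ (Ioi t) := by
    rw [← hU, measure_union hd measurableSet_Ioi]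
  simp only [sf, this, ENNReal.toReal_add (measure_ne_top μ _) (measure_ne_top μ _)]
  ring

lemma sf_cont (μ : Measure ℝ) [IsProbabilityMeasure μ] (hatom : ∀ u, μ {u} = 0) :
    Continuous (sf μ) := by
  rw [continuous_iff_continuousAt]
  intro t
  rw [Metric.continuousAt_iff]
  intro ε hε
  -- shrinking intervals around t
  set S : ℕ → Set ℝ := fun n => Ioc (t - (n + 1 : ℝ)⁻¹) (t + (n + 1 : ℝ)⁻¹) with hS
  have hinter : ⋂ n, S n = {t} := by
    ext x
    simp only [mem_iInter, hS, mem_Ioc, mem_singleton_iff]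
    constructor
    · intro hx
      have h1 : x ≤ t := by
        by_contra hlt
        push_neg at hlt
        obtain ⟨n, hn⟩ := exists_nat_gt (x - t)⁻¹
        have hpos : (0:ℝ) < x - t := by linarith
        have : ((n:ℝ) + 1)⁻¹ < x - t := by
          rw [inv_lt_comm₀ (by positivity) hpos]
          calc (x - t)⁻¹ < n := hn
            _ < n + 1 := by linarith
        have := (hx n).2
        linarith
      have h2 : t ≤ x := by
        by_contra hlt
        push_neg at hlt
        obtain ⟨n, hn⟩ := exists_nat_gt (t - x)⁻¹
        have hpos : (0:ℝ) < t - x := by linarith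
        have : ((n:ℝ) + 1)⁻¹ < t - x := by
          rw [inv_lt_comm₀ (by positivity) hpos]
          calc (t - x)⁻¹ < n := hn
            _ < n + 1 := by linarith
        have := (hx n).1
        linarith
      linarith
    · intro hx
      subst hx
      intro n
      constructor <;> [skip; skip] <;>
        · have : (0:ℝ) < ((n:ℝ)+1)⁻¹ := by positivity
          linarith
  have htend : Tendsto (fun n => μ (S n)) atTop (nhds 0) := by
    have := tendsto_measure_iInter_atTop (μ := μ) (s := S)
      (fun n => (measurableSet_Ioc).nullMeasurableSet)
      (fun m n hmn => by
        apply Ioc_subset_Ioc <;>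
        · have : ((n:ℝ)+1)⁻¹ ≤ ((m:ℝ)+1)⁻¹ := by
            apply inv_anti₀ (by positivity)
            have : (m:ℝ) ≤ n := Nat.cast_le.mpr hmn
            linarith
          linarith)
      ⟨0, measure_ne_top μ _⟩
    rw [hinter, hatom t] at this
    exact this
  have hev : ∀ᶠ n in atTop, μ (S n) < ENNReal.ofReal ε :=
    htend.eventually_lt_const (by simpa using ENNReal.ofReal_pos.mpr hε)
  obtain ⟨n, hn⟩ := hev.exists
  refine ⟨((n:ℝ)+1)⁻¹, by positivity, ?_⟩
  intro s hs
  rw [Real.dist_eq] at hs ⊢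
  set δ : ℝ := ((n:ℝ)+1)⁻¹
  have hwidth : sf μ (t - δ) - sf μ (t + δ) < ε := by
    rw [sf_sub μ (by have : (0:ℝ) < δ := by positivity
                     linarith)]
    exact ENNReal.toReal_lt_of_lt_ofReal hn
  have h1 : sf μ (t + δ) ≤ sf μ s := sf_anti μ (by rw [abs_lt] at hs; linarith)
  have h2 : sf μ s ≤ sf μ (t - δ) := sf_anti μ (by rw [abs_lt] at hs; linarith)
  have hδ : (0:ℝ) < δ := by positivity
  have h3 : sf μ (t + δ) ≤ sf μ t := sf_anti μ (by linarith)
  have h4 : sf μ t ≤ sf μ (t - δ) := sf_anti μ (by linarith)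
  rw [abs_lt]; constructor <;> linarith

noncomputable def qS (μ : Measure ℝ) (q : ℝ) : Set ℝ := Icc 0 1 ∩ (sf μ) ⁻¹' {q}
noncomputable def qlo (μ : Measure ℝ) (q : ℝ) : ℝ := sInf (qS μ q)
noncomputable def qhi (μ : Measure ℝ) (q : ℝ) : ℝ := sSup (qS μ q)


section quant
variable (μ : Measure ℝ) [IsProbabilityMeasure μ] (hatom : ∀ u, μ {u} = 0)
  (h0 : sf μ 0 = 1) (h1 : sf μ 1 = 0)

lemma qS_bddB (q : ℝ) : BddBelow (qS μ q) := ⟨0, fun x hx => hx.1.1⟩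
lemma qS_bddA (q : ℝ) : BddAbove (qS μ q) := ⟨1, fun x hx => hx.1.2⟩

include hatom h0 h1 in
lemma qS_ne {q : ℝ} (hq : q ∈ Icc (0:ℝ) 1) : (qS μ q).Nonempty := by
  have hcont : Continuous (sf μ) := sf_cont μ hatom
  have := intermediate_value_Icc' (zero_le_one (α := ℝ)) hcont.continuousOn
  rw [h0, h1] at this
  obtain ⟨c, hc, hcq⟩ := this hq
  exact ⟨c, hc, hcq⟩

include hatom in
lemma qS_closed (q : ℝ) : IsClosed (qS μ q) :=
  isClosed_Icc.inter (isClosed_singleton.preimage (sf_cont μ hatom))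

include hatom h0 h1 in
lemma qlo_mem {q : ℝ} (hq : q ∈ Icc (0:ℝ) 1) : qlo μ q ∈ qS μ q :=
  (qS_closed μ hatom q).csInf_mem (qS_ne μ hatom h0 h1 hq) (qS_bddB μ q)

include hatom h0 h1 in
lemma qhi_mem {q : ℝ} (hq : q ∈ Icc (0:ℝ) 1) : qhi μ q ∈ qS μ q :=
  (qS_closed μ hatom q).csSup_mem (qS_ne μ hatom h0 h1 hq) (qS_bddA μ q)

lemma qS_le {q q' s t : ℝ} (hqq : q < q') (hs : s ∈ qS μ q) (ht : t ∈ qS μ q') : t ≤ s := by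
  by_contra hst
  push_neg at hst
  have := sf_anti μ hst.le
  rw [hs.2, ht.2] at this
  exact absurd this (not_le.mpr hqq)

include hatom h0 h1 in
lemma qlo_le_qhi {q : ℝ} (hq : q ∈ Icc (0:ℝ) 1) : qlo μ q ≤ qhi μ q :=
  csInf_le_csSup (qS_ne μ hatom h0 h1 hq) (qS_bddB μ q) (qS_bddA μ q)

include hatom h0 h1 in
lemma qhi_le_qlo {q q' : ℝ} (hq : q ∈ Icc (0:ℝ) 1) (hq' : q' ∈ Icc (0:ℝ) 1)
    (hqq : q < q') : qhi μ q' ≤ qlo μ q := by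
  apply csSup_le (qS_ne μ hatom h0 h1 hq')
  intro t ht
  apply le_csInf (qS_ne μ hatom h0 h1 hq)
  intro s hs
  exact qS_le μ hqq hs ht

include hatom h0 h1 in
lemma qlo_anti {q q' : ℝ} (hq : q ∈ Icc (0:ℝ) 1) (hq' : q' ∈ Icc (0:ℝ) 1)
    (hqq : q ≤ q') : qlo μ q' ≤ qlo μ q := by
  rcases eq_or_lt_of_le hqq with rfl | h
  · exact le_rfl
  · exact le_trans (qlo_le_qhi μ hatom h0 h1 hq') (qhi_le_qlo μ hatom h0 h1 hq hq' h)

include hatom h0 h1 in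
lemma qhi_anti {q q' : ℝ} (hq : q ∈ Icc (0:ℝ) 1) (hq' : q' ∈ Icc (0:ℝ) 1)
    (hqq : q ≤ q') : qhi μ q' ≤ qhi μ q := by
  rcases eq_or_lt_of_le hqq with rfl | h
  · exact le_rfl
  · exact le_trans (qhi_le_qlo μ hatom h0 h1 hq hq' h) (qlo_le_qhi μ hatom h0 h1 hq)

include hatom h0 h1 in
lemma qhi_sup {q : ℝ} (hq : q ∈ Ico (0:ℝ) 1) :
    sSup (qhi μ '' Ioc q 1) = qlo μ q := by
  have hqI : q ∈ Icc (0:ℝ) 1 := ⟨hq.1, hq.2.le⟩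
  have hne : (qhi μ '' Ioc q 1).Nonempty := ⟨qhi μ 1, ⟨1, ⟨hq.2, le_rfl⟩, rfl⟩⟩
  have hub : ∀ x ∈ qhi μ '' Ioc q 1, x ≤ qlo μ q := by
    rintro x ⟨r, hr, rfl⟩
    exact qhi_le_qlo μ hatom h0 h1 hqI ⟨hq.1.trans hr.1.le, hr.2⟩ hr.1
  have hbdd : BddAbove (qhi μ '' Ioc q 1) := ⟨qlo μ q, hub⟩
  set s := sSup (qhi μ '' Ioc q 1) with hs
  have hsle : s ≤ qlo μ q := csSup_le hne hub
  -- F s ≤ r for all r ∈ (q,1]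
  have hFs_le : ∀ r ∈ Ioc q 1, sf μ s ≤ r := by
    intro r hr
    have hmem : qhi μ r ∈ qS μ r := qhi_mem μ hatom h0 h1 ⟨hq.1.trans hr.1.le, hr.2⟩
    have : qhi μ r ≤ s := le_csSup hbdd ⟨r, hr, rfl⟩
    calc sf μ s ≤ sf μ (qhi μ r) := sf_anti μ this
      _ = r := hmem.2
  have hFsq : sf μ s ≤ q := by
    by_contra hlt
    push_neg at hlt
    have hle1 : sf μ s ≤ 1 := sf_le_one μ s
    have hmidq : q < (q + sf μ s)/2 := by linarith
    have := hFs_le ((q + sf μ s)/2) ⟨hmidq, by linarith⟩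
    linarith
  have hloS : qlo μ q ∈ qS μ q := qlo_mem μ hatom h0 h1 hqI
  have hFsq' : q ≤ sf μ s := by
    calc q = sf μ (qlo μ q) := hloS.2.symm
      _ ≤ sf μ s := sf_anti μ hsle
  have hsS : s ∈ qS μ q := by
    refine ⟨⟨?_, hsle.trans hloS.1.2⟩, le_antisymm hFsq hFsq'⟩
    have : qhi μ 1 ∈ qS μ 1 := qhi_mem μ hatom h0 h1 ⟨zero_le_one, le_rfl⟩
    exact le_trans this.1.1 (le_csSup hbdd ⟨1, ⟨hq.2, le_rfl⟩, rfl⟩)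
  exact le_antisymm hsle (csInf_le (qS_bddB μ q) hsS)

include hatom h0 h1 in
lemma qlo_inf {q : ℝ} (hq : q ∈ Ioc (0:ℝ) 1) :
    sInf (qlo μ '' Ico 0 q) = qhi μ q := by
  have hqI : q ∈ Icc (0:ℝ) 1 := ⟨hq.1.le, hq.2⟩
  have hne : (qlo μ '' Ico 0 q).Nonempty := ⟨qlo μ 0, ⟨0, ⟨le_rfl, hq.1⟩, rfl⟩⟩
  have hlb : ∀ x ∈ qlo μ '' Ico 0 q, qhi μ q ≤ x := by
    rintro x ⟨r, hr, rfl⟩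
    exact qhi_le_qlo μ hatom h0 h1 ⟨hr.1, hr.2.le.trans hq.2⟩ hqI hr.2
  have hbdd : BddBelow (qlo μ '' Ico 0 q) := ⟨qhi μ q, hlb⟩
  set s := sInf (qlo μ '' Ico 0 q) with hs
  have hsge : qhi μ q ≤ s := le_csInf hne hlb
  have hFs_ge : ∀ r ∈ Ico (0:ℝ) q, r ≤ sf μ s := by
    intro r hr
    have hmem : qlo μ r ∈ qS μ r := qlo_mem μ hatom h0 h1 ⟨hr.1, hr.2.le.trans hq.2⟩
    have : s ≤ qlo μ r := csInf_le hbdd ⟨r, hr, rfl⟩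
    calc r = sf μ (qlo μ r) := hmem.2.symm
      _ ≤ sf μ s := sf_anti μ this
  have hFsq : q ≤ sf μ s := by
    by_contra hlt
    push_neg at hlt
    have hge0 : 0 ≤ sf μ s := sf_nonneg μ s
    have := hFs_ge ((sf μ s + q)/2) ⟨by linarith, by linarith⟩
    linarith
  have hhiS : qhi μ q ∈ qS μ q := qhi_mem μ hatom h0 h1 hqI
  have hFsq' : sf μ s ≤ q := by
    calc sf μ s ≤ sf μ (qhi μ q) := sf_anti μ hsge
      _ = q := hhiS.2
  have hsS : s ∈ qS μ q := by
    refine ⟨⟨hhiS.1.1.trans hsge, ?_⟩, le_antisymm hFsq' hFsq⟩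
    have : qlo μ 0 ∈ qS μ 0 := qlo_mem μ hatom h0 h1 ⟨le_rfl, zero_le_one⟩
    exact le_trans (csInf_le hbdd ⟨0, ⟨le_rfl, hq.1⟩, rfl⟩) this.1.2
  exact le_antisymm (le_csSup (qS_bddA μ q) hsS) hsge

end quant

theorem stmt_9 {X : Type*} [MeasurableSpace X] {𝒜 : Type*} [Fintype 𝒜]
    (hcard : 2 ≤ Fintype.card 𝒜)
    (ν : 𝒜 → Measure X) [∀ a, IsProbabilityMeasure (ν a)]
    (η : 𝒜 → X → ℝ) (hη : ∀ a, Measurable (η a))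
    (hη0 : ∀ a x, 0 ≤ η a x) (hη1 : ∀ a x, η a x ≤ 1)
    (p : 𝒜 → ℝ) (hp0 : ∀ a, 0 < p a) (hp1 : ∀ a, p a < 1) (hsum : ∑ a, p a = 1)
    (hatomless : ∀ (a : 𝒜) (u : ℝ), ν a {x | η a x = u} = 0) :
    ∃ t : 𝒜 → ℝ, (∑ a, t a = 0) ∧
      ∀ a b : 𝒜, ν a {x | η a x > 1/2 + t a / (2 * p a)} =
        ν b {x | η b x > 1/2 + t b / (2 * p b)} := by
  haveI hne𝒜 : Nonempty 𝒜 := Fintype.card_pos_iff.mp (by omega)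
  set μ : 𝒜 → Measure ℝ := fun a => (ν a).map (η a) with hμdef
  haveI : ∀ a, IsProbabilityMeasure (μ a) :=
    fun a => Measure.isProbabilityMeasure_map (hη a).aemeasurable
  have hmap : ∀ (a : 𝒜) (c : ℝ), ν a {x | η a x > c} = μ a (Ioi c) := by
    intro a c
    rw [hμdef, Measure.map_apply (hη a) measurableSet_Ioi]
    rfl
  have hatom : ∀ (a : 𝒜) (u : ℝ), μ a {u} = 0 := by
    intro a u
    rw [hμdef, Measure.map_apply (hη a) (measurableSet_singleton u)]
    exact hatomless a u
  have h0 : ∀ a, sf (μ a) 0 = 1 := by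
    intro a
    have hIic : μ a (Iic 0) = 0 := by
      rw [hμdef, Measure.map_apply (hη a) measurableSet_Iic]
      exact measure_mono_null (fun x hx => le_antisymm hx (hη0 a x)) (hatomless a 0)
    have hsplit := measure_add_measure_compl (μ := μ a) (measurableSet_Iic (a := (0:ℝ)))
    rw [compl_Iic, hIic, zero_add, measure_univ] at hsplit
    simp [sf, hsplit]
  have h1 : ∀ a, sf (μ a) 1 = 0 := by
    intro a
    have hIoi : μ a (Ioi 1) = 0 := by
      rw [hμdef, Measure.map_apply (hη a) measurableSet_Ioi]
      exact measure_mono_null (t := ∅) (fun x hx => (not_lt.mpr (hη1 a x) hx).elim)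
        measure_empty
    simp [sf, hIoi]
  -- key existence of common level q
  obtain ⟨q, hqI, hhq, hHq⟩ : ∃ q ∈ Icc (0:ℝ) 1,
      (∑ a, p a * qlo (μ a) q) ≤ 1/2 ∧ 1/2 ≤ ∑ a, p a * qhi (μ a) q := by
    by_contra hcon
    push_neg at hcon
    have hqlo1 : ∀ a, qlo (μ a) 1 = 0 := by
      intro a
      have hm : (0:ℝ) ∈ qS (μ a) 1 := ⟨⟨le_rfl, zero_le_one⟩, h0 a⟩
      exact le_antisymm (csInf_le (qS_bddB (μ a) 1) hm)
        (qlo_mem (μ a) (hatom a) (h0 a) (h1 a) ⟨zero_le_one, le_rfl⟩).1.1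
    have hqhi0 : ∀ a, qhi (μ a) 0 = 1 := by
      intro a
      have hm : (1:ℝ) ∈ qS (μ a) 0 := ⟨⟨zero_le_one, le_rfl⟩, h1 a⟩
      exact le_antisymm (qhi_mem (μ a) (hatom a) (h0 a) (h1 a) ⟨le_rfl, zero_le_one⟩).1.2
        (le_csSup (qS_bddA (μ a) 0) hm)
    have hh1 : (∑ a, p a * qlo (μ a) 1) = 0 := by simp [hqlo1]
    have hH0 : (∑ a, p a * qhi (μ a) 0) = 1 := by simp [hqhi0, hsum]
    have hdich : ∀ q ∈ Icc (0:ℝ) 1,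
        (∑ a, p a * qhi (μ a) q) < 1/2 ∨ 1/2 < ∑ a, p a * qlo (μ a) q := by
      intro q hq
      by_cases hc : (∑ a, p a * qlo (μ a) q) ≤ 1/2
      · exact Or.inl (hcon q hq hc)
      · exact Or.inr (not_le.mp hc)
    set B : Set ℝ := {q | q ∈ Icc (0:ℝ) 1 ∧ (∑ a, p a * qhi (μ a) q) < 1/2} with hBdef
    have hB1 : (1:ℝ) ∈ B := by
      refine ⟨⟨zero_le_one, le_rfl⟩, ?_⟩
      refine hcon 1 ⟨zero_le_one, le_rfl⟩ ?_
      rw [hh1]; norm_num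
    have hBne : B.Nonempty := ⟨1, hB1⟩
    have hBbdd : BddBelow B := ⟨0, fun x hx => hx.1.1⟩
    set Q := sInf B with hQdef
    have hQmem : Q ∈ Icc (0:ℝ) 1 :=
      ⟨le_csInf hBne (fun b hb => hb.1.1), csInf_le hBbdd hB1⟩
    by_cases hQB : (∑ a, p a * qhi (μ a) Q) < 1/2
    · -- Q essentially in B; contradiction from the left
      have hQpos : 0 < Q := by
        rcases eq_or_lt_of_le hQmem.1 with hQ0 | h
        · exfalso; rw [← hQ0] at hQB; rw [hH0] at hQB; norm_num at hQB
        · exact h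
      have hless : ∀ r, 0 ≤ r → r < Q → 1/2 < ∑ a, p a * qlo (μ a) r := by
        intro r hr0 hrQ
        have hrI : r ∈ Icc (0:ℝ) 1 := ⟨hr0, hrQ.le.trans hQmem.2⟩
        rcases hdich r hrI with hc | hc
        · exact absurd (csInf_le hBbdd ⟨hrI, hc⟩) (not_le.mpr hrQ)
        · exact hc
      set ε := 1/2 - ∑ a, p a * qhi (μ a) Q with hεdef
      have hεpos : 0 < ε := by rw [hεdef]; linarith
      have hchoose : ∀ a, ∃ r, 0 ≤ r ∧ r < Q ∧
          qlo (μ a) r < qhi (μ a) Q + ε := by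
        intro a
        have hsupinf := qlo_inf (μ a) (hatom a) (h0 a) (h1 a) ⟨hQpos, hQmem.2⟩
        have hne : (qlo (μ a) '' Ico 0 Q).Nonempty := ⟨qlo (μ a) 0, ⟨0, ⟨le_rfl, hQpos⟩, rfl⟩⟩
        have hlt : sInf (qlo (μ a) '' Ico 0 Q) < qhi (μ a) Q + ε := by
          rw [hsupinf]; linarith
        obtain ⟨x, ⟨r, hr, rfl⟩, hx⟩ := exists_lt_of_csInf_lt hne hlt
        exact ⟨r, hr.1, hr.2, hx⟩
      choose qa hqa0 hqa1 hqa2 using hchoose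
      set q' := Finset.univ.sup' Finset.univ_nonempty qa with hq'def
      have hq'lt : q' < Q := (Finset.sup'_lt_iff Finset.univ_nonempty).mpr (fun a _ => hqa1 a)
      have hq'0 : 0 ≤ q' := by
        obtain ⟨a⟩ := hne𝒜
        exact (hqa0 a).trans (Finset.le_sup' qa (Finset.mem_univ a))
      have hq'I : q' ∈ Icc (0:ℝ) 1 := ⟨hq'0, hq'lt.le.trans hQmem.2⟩
      have hub : (∑ a, p a * qlo (μ a) q') ≤ 1/2 := by
        have hstep : ∀ a, p a * qlo (μ a) q' ≤ p a * qhi (μ a) Q + p a * ε := by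
          intro a
          have h1' : qlo (μ a) q' ≤ qlo (μ a) (qa a) :=
            qlo_anti (μ a) (hatom a) (h0 a) (h1 a)
              ⟨hqa0 a, (hqa1 a).le.trans hQmem.2⟩ hq'I
              (Finset.le_sup' qa (Finset.mem_univ a))
          have h2' : qlo (μ a) (qa a) ≤ qhi (μ a) Q + ε := (hqa2 a).le
          calc p a * qlo (μ a) q' ≤ p a * (qhi (μ a) Q + ε) :=
                mul_le_mul_of_nonneg_left (h1'.trans h2') (hp0 a).le
            _ = p a * qhi (μ a) Q + p a * ε := by ring
        calc (∑ a, p a * qlo (μ a) q') ≤ ∑ a, (p a * qhi (μ a) Q + p a * ε) :=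
              Finset.sum_le_sum (fun a _ => hstep a)
          _ = (∑ a, p a * qhi (μ a) Q) + (∑ a, p a) * ε := by
              rw [Finset.sum_add_distrib, ← Finset.sum_mul]
          _ = 1/2 := by rw [hsum, hεdef]; ring
      exact absurd hub (not_le.mpr (hless q' hq'0 hq'lt))
    · -- H Q ≥ 1/2, so h Q > 1/2; contradiction from the right
      push_neg at hQB
      have hhQ : 1/2 < ∑ a, p a * qlo (μ a) Q := by
        rcases hdich Q hQmem with hc | hc
        · exact absurd hc (not_lt.mpr hQB)
        · exact hc
      have hQlt1 : Q < 1 := by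
        rcases eq_or_lt_of_le hQmem.2 with hQ1 | h
        · exfalso; rw [hQ1, hh1] at hhQ; norm_num at hhQ
        · exact h
      have hmore : ∀ r, Q < r → r ≤ 1 → (∑ a, p a * qhi (μ a) r) < 1/2 := by
        intro r hQr hr1
        obtain ⟨b, hbB, hbr⟩ := exists_lt_of_csInf_lt hBne hQr
        have hrI : r ∈ Icc (0:ℝ) 1 := ⟨(hQmem.1.trans hQr.le), hr1⟩
        have hmono : (∑ a, p a * qhi (μ a) r) ≤ ∑ a, p a * qhi (μ a) b := by
          refine Finset.sum_le_sum (fun a _ => ?_)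
          exact mul_le_mul_of_nonneg_left
            (qhi_anti (μ a) (hatom a) (h0 a) (h1 a) hbB.1 hrI hbr.le) (hp0 a).le
        exact lt_of_le_of_lt hmono hbB.2
      set ε := (∑ a, p a * qlo (μ a) Q) - 1/2 with hεdef
      have hεpos : 0 < ε := by rw [hεdef]; linarith
      have hchoose : ∀ a, ∃ r, Q < r ∧ r ≤ 1 ∧
          qlo (μ a) Q - ε < qhi (μ a) r := by
        intro a
        have hsupinf := qhi_sup (μ a) (hatom a) (h0 a) (h1 a) ⟨hQmem.1, hQlt1⟩
        have hne : (qhi (μ a) '' Ioc Q 1).Nonempty := ⟨qhi (μ a) 1, ⟨1, ⟨hQlt1, le_rfl⟩, rfl⟩⟩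
        have hlt : qlo (μ a) Q - ε < sSup (qhi (μ a) '' Ioc Q 1) := by
          rw [hsupinf]; linarith
        obtain ⟨x, ⟨r, hr, rfl⟩, hx⟩ := exists_lt_of_lt_csSup hne hlt
        exact ⟨r, hr.1, hr.2, hx⟩
      choose qa hqa1 hqa1' hqa2 using hchoose
      set q' := Finset.univ.inf' Finset.univ_nonempty qa with hq'def
      have hq'gt : Q < q' := (Finset.lt_inf'_iff Finset.univ_nonempty).mpr (fun a _ => hqa1 a)
      have hq'le1 : q' ≤ 1 := by
        obtain ⟨a⟩ := hne𝒜
        exact (Finset.inf'_le qa (Finset.mem_univ a)).trans (hqa1' a)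
      have hq'I : q' ∈ Icc (0:ℝ) 1 := ⟨hQmem.1.trans hq'gt.le, hq'le1⟩
      have hlb : 1/2 ≤ ∑ a, p a * qhi (μ a) q' := by
        have hstep : ∀ a, p a * qlo (μ a) Q - p a * ε ≤ p a * qhi (μ a) q' := by
          intro a
          have h1' : qhi (μ a) (qa a) ≤ qhi (μ a) q' :=
            qhi_anti (μ a) (hatom a) (h0 a) (h1 a) hq'I
              ⟨hQmem.1.trans (hqa1 a).le, hqa1' a⟩
              (Finset.inf'_le qa (Finset.mem_univ a))
          have h2' : qlo (μ a) Q - ε ≤ qhi (μ a) (qa a) := (hqa2 a).le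
          calc p a * qlo (μ a) Q - p a * ε = p a * (qlo (μ a) Q - ε) := by ring
            _ ≤ p a * qhi (μ a) q' :=
                mul_le_mul_of_nonneg_left (h2'.trans h1') (hp0 a).le
        calc (1:ℝ)/2 = (∑ a, p a * qlo (μ a) Q) - (∑ a, p a) * ε := by
              rw [hsum, hεdef]; ring
          _ = ∑ a, (p a * qlo (μ a) Q - p a * ε) := by
              rw [Finset.sum_sub_distrib, ← Finset.sum_mul]
          _ ≤ ∑ a, p a * qhi (μ a) q' := Finset.sum_le_sum (fun a _ => hstep a)
      exact absurd hlb (not_le.mpr (hmore q' hq'gt hq'le1))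
  -- assemble thresholds
  set hq : ℝ := ∑ a, p a * qlo (μ a) q with hhqdef
  set Hq : ℝ := ∑ a, p a * qhi (μ a) q with hHqdef
  set l : ℝ := if Hq ≤ hq then 0 else (1/2 - hq) / (Hq - hq) with hldef
  have hgS : ∀ a, qlo (μ a) q ∈ qS (μ a) q := fun a => qlo_mem (μ a) (hatom a) (h0 a) (h1 a) hqI
  have hGS : ∀ a, qhi (μ a) q ∈ qS (μ a) q := fun a => qhi_mem (μ a) (hatom a) (h0 a) (h1 a) hqI
  have hgG : ∀ a, qlo (μ a) q ≤ qhi (μ a) q :=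
    fun a => qlo_le_qhi (μ a) (hatom a) (h0 a) (h1 a) hqI
  have hl0 : 0 ≤ l := by
    rw [hldef]
    split
    · exact le_rfl
    · next hns =>
        push_neg at hns
        exact div_nonneg (by linarith) (by linarith)
  have hl1 : l ≤ 1 := by
    rw [hldef]
    split
    · exact zero_le_one
    · next hns =>
        push_neg at hns
        rw [div_le_one (by linarith)]
        linarith
  set c : 𝒜 → ℝ := fun a => qlo (μ a) q + l * (qhi (μ a) q - qlo (μ a) q) with hcdef
  have hcg : ∀ a, qlo (μ a) q ≤ c a := by
    intro a
    have := mul_nonneg hl0 (sub_nonneg.mpr (hgG a))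
    rw [hcdef]; dsimp only; linarith
  have hcG : ∀ a, c a ≤ qhi (μ a) q := by
    intro a
    have h1' : l * (qhi (μ a) q - qlo (μ a) q) ≤ 1 * (qhi (μ a) q - qlo (μ a) q) :=
      mul_le_mul_of_nonneg_right hl1 (sub_nonneg.mpr (hgG a))
    rw [hcdef]; dsimp only; linarith
  have hFc : ∀ a, sf (μ a) (c a) = q := by
    intro a
    have hle : sf (μ a) (c a) ≤ q := by
      have := sf_anti (μ a) (hcg a)
      rw [(hgS a).2] at this; exact this
    have hge : q ≤ sf (μ a) (c a) := by
      have := sf_anti (μ a) (hcG a)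
      rw [(hGS a).2] at this; exact this
    exact le_antisymm hle hge
  have hsumc : (∑ a, p a * c a) = 1/2 := by
    have hexp : (∑ a, p a * c a) = hq + l * (Hq - hq) := by
      simp only [hcdef, hhqdef, hHqdef]
      rw [← Finset.sum_sub_distrib, Finset.mul_sum, ← Finset.sum_add_distrib]
      exact Finset.sum_congr rfl (fun a _ => by ring)
    rw [hexp, hldef]
    split
    · next hle =>
        have : Hq = hq := le_antisymm hle (by
          refine Finset.sum_le_sum (fun a _ => ?_)
          exact mul_le_mul_of_nonneg_left (hgG a) (hp0 a).le)
        rw [this] at hHq ⊢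
        have : hq = 1/2 := le_antisymm hhq hHq
        rw [this]; ring
    · next hns =>
        push_neg at hns
        rw [div_mul_cancel₀ _ (by linarith : Hq - hq ≠ 0)]
        ring
  refine ⟨fun a => 2 * p a * (c a - 1/2), ?_, ?_⟩
  · have : (∑ a, 2 * p a * (c a - 1/2)) = 2 * (∑ a, p a * c a) - (∑ a, p a) := by
      rw [Finset.mul_sum, ← Finset.sum_sub_distrib]
      exact Finset.sum_congr rfl (fun a _ => by ring)
    rw [this, hsumc, hsum]; ring
  · intro a b
    have hthr : ∀ a : 𝒜, 1/2 + (2 * p a * (c a - 1/2)) / (2 * p a) = c a := by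
      intro a
      have hpa : (2:ℝ) * p a ≠ 0 := by
        have := hp0 a; positivity
      have hpa' : p a ≠ 0 := (hp0 a).ne'
      field_simp
      ring
    rw [hmap a, hmap b, hthr a, hthr b]
    have hab : sf (μ a) (c a) = sf (μ b) (c b) := by rw [hFc a, hFc b]
    exact (ENNReal.toReal_eq_toReal_iff' (measure_ne_top _ _) (measure_ne_top _ _)).mp hab
end

section
/- Fair Bayes-optimal classifier under demographic parity (one-sided reduction): Let A ∈ {0,1}, Y ∈ {0,1}, with p_a = P(A=a) > 0 and η_a(x) = P(Y=1|A=a,X=x). Fix δ ≥ 0 and s ≥ 0, and let f_s(x,a) = 1{η_a(x) > 1/2 + (2a−1)s/(2p_a)} (with arbitrary randomization τ_a ∈ [0,1] on the boundary set {η_a(x) = 1/2 + (2a−1)s/(2p_a)}). If the resulting classifier f satisfies DDP(f) = δ exactly, then f minimizes the misclassification risk P(Ŷ ≠ Y) among all randomized classifiers g with DDP(g) ≤ δ. -/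
open MeasureTheory Set

lemma integrable_of_bdd' {Z : Type*} [MeasurableSpace Z] (μ : Measure Z)
    [IsFiniteMeasure μ] {f : Z → ℝ} (hf : Measurable f) (C : ℝ)
    (hC : ∀ x, |f x| ≤ C) : Integrable f μ := by
  refine ⟨hf.aestronglyMeasurable, ?_⟩
  exact HasFiniteIntegral.of_bounded (C := C) (Filter.Eventually.of_forall hC)

theorem stmt_11 {X : Type*} [MeasurableSpace X]
    (μ : Measure (X × Bool)) [IsProbabilityMeasure μ]
    (η : Bool → X → ℝ) (hη : ∀ a, Measurable (η a))
    (hη0 : ∀ a x, 0 ≤ η a x) (hη1 : ∀ a x, η a x ≤ 1)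
    (p : Bool → ℝ) (hp : ∀ a, 0 < p a)
    (hpdef : ∀ a, p a = (μ {q : X × Bool | q.2 = a}).toReal)
    (risk DDP : (X × Bool → ℝ) → ℝ)
    (hrisk : ∀ g : X × Bool → ℝ,
      risk g = ∫ q, (g q * (1 - η q.2 q.1) + (1 - g q) * η q.2 q.1) ∂μ)
    (hDDP : ∀ g : X × Bool → ℝ,
      DDP g = ∫ q, g q * ((if q.2 then (1:ℝ) else -1) / p q.2) ∂μ)
    (δ s : ℝ) (hδ : 0 ≤ δ) (hs : 0 ≤ s)
    (τ : Bool → ℝ) (hτ0 : ∀ a, 0 ≤ τ a) (hτ1 : ∀ a, τ a ≤ 1)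
    (f : X × Bool → ℝ) (hfm : Measurable f)
    (hfdef : ∀ (x : X) (a : Bool), f (x, a) =
      if η a x > 1/2 + (if a then (1:ℝ) else -1) * s / (2 * p a) then 1
      else if η a x = 1/2 + (if a then (1:ℝ) else -1) * s / (2 * p a) then τ a
      else 0)
    (hfddp : DDP f = δ) :
    ∀ g : X × Bool → ℝ, Measurable g → (∀ q, 0 ≤ g q) → (∀ q, g q ≤ 1) →
      DDP g ≤ δ → risk f ≤ risk g := by
  intro g hg hg0 hg1 hgd
  -- bounds on f
  have hf0 : ∀ q : X × Bool, 0 ≤ f q := by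
    rintro ⟨x, a⟩
    rw [hfdef]
    split_ifs <;> first | exact hτ0 a | norm_num
  have hf1 : ∀ q : X × Bool, f q ≤ 1 := by
    rintro ⟨x, a⟩
    rw [hfdef]
    split_ifs <;> first | exact hτ1 a | norm_num
  -- auxiliary functions
  set c : X × Bool → ℝ := fun q => (if q.2 then (1:ℝ) else -1) / p q.2 with hc
  set eta : X × Bool → ℝ := fun q => η q.2 q.1 with heta
  have hetam : Measurable eta := by
    have : eta = fun q : X × Bool => if q.2 then η true q.1 else η false q.1 := by
      funext q; obtain ⟨x, a⟩ := q; cases a <;> rfl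
    rw [this]
    exact Measurable.ite (measurable_snd (MeasurableSet.singleton true))
      ((hη true).comp measurable_fst) ((hη false).comp measurable_fst)
  have hcm : Measurable c := by
    have : c = fun q : X × Bool => if q.2 then (1 : ℝ) / p true else -1 / p false := by
      funext q; obtain ⟨x, a⟩ := q; cases a <;> rfl
    rw [this]
    exact Measurable.ite (measurable_snd (MeasurableSet.singleton true))
      measurable_const measurable_const
  -- bound on c
  set B : ℝ := 1 / p true + 1 / p false with hB
  have hcb : ∀ q, |c q| ≤ B := by
    rintro ⟨x, a⟩
    have h0 : (0:ℝ) < 1 / p true := div_pos one_pos (hp true)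
    have h1 : (0:ℝ) < 1 / p false := div_pos one_pos (hp false)
    cases a
    · calc |c (x, false)| = |(-1:ℝ) / p false| := by norm_num [hc]
        _ = 1 / p false := by
            rw [abs_div, abs_neg, abs_one, abs_of_pos (hp false)]
        _ ≤ B := by rw [hB]; linarith
    · calc |c (x, true)| = |(1:ℝ) / p true| := by norm_num [hc]
        _ = 1 / p true := by rw [abs_div, abs_one, abs_of_pos (hp true)]
        _ ≤ B := by rw [hB]; linarith
  -- integrability facts
  have ieg : Integrable (fun q => g q * (1 - eta q) + (1 - g q) * eta q) μ := by
    apply integrable_of_bdd' μ (f := fun q => g q * (1 - eta q) + (1 - g q) * eta q) _ 2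
    · intro q
      have h1 := hg0 q; have h2 := hg1 q
      have h3 := hη0 q.2 q.1; have h4 := hη1 q.2 q.1
      rw [abs_le]
      constructor <;> nlinarith [mul_nonneg (sub_nonneg.2 h2) h3,
        mul_nonneg h1 (sub_nonneg.2 h4)]
    · exact (hg.mul (measurable_const.sub hetam)).add
        ((measurable_const.sub hg).mul hetam)
  have ief : Integrable (fun q => f q * (1 - eta q) + (1 - f q) * eta q) μ := by
    apply integrable_of_bdd' μ (f := fun q => f q * (1 - eta q) + (1 - f q) * eta q) _ 2
    · intro q
      have h1 := hf0 q; have h2 := hf1 q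
      have h3 := hη0 q.2 q.1; have h4 := hη1 q.2 q.1
      rw [abs_le]
      constructor <;> nlinarith [mul_nonneg (sub_nonneg.2 h2) h3,
        mul_nonneg h1 (sub_nonneg.2 h4)]
    · exact (hfm.mul (measurable_const.sub hetam)).add
        ((measurable_const.sub hfm).mul hetam)
  have iA : Integrable (fun q => (g q - f q) * (1 - 2 * eta q)) μ := by
    apply integrable_of_bdd' μ _ 1
    · intro q
      have h1 := hg0 q; have h2 := hg1 q
      have h3 := hf0 q; have h4 := hf1 q
      have h5 := hη0 q.2 q.1; have h6 := hη1 q.2 q.1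
      have : |g q - f q| ≤ 1 := by rw [abs_le]; constructor <;> linarith
      have h7 : |1 - 2 * eta q| ≤ 1 := by
        rw [abs_le]; constructor <;> simp [heta] <;> linarith
      calc |(g q - f q) * (1 - 2 * eta q)| = |g q - f q| * |1 - 2 * eta q| := abs_mul _ _
        _ ≤ 1 * 1 := mul_le_mul this h7 (abs_nonneg _) zero_le_one
        _ = 1 := one_mul 1
    · exact (hg.sub hfm).mul (measurable_const.sub (hetam.const_mul 2))
  have iBgc : Integrable (fun q => g q * c q) μ := by
    apply integrable_of_bdd' μ _ B
    · intro q
      have := hcb q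
      calc |g q * c q| = |g q| * |c q| := abs_mul _ _
        _ ≤ 1 * B := by
            apply mul_le_mul _ this (abs_nonneg _) zero_le_one
            rw [abs_le]; constructor <;> [linarith [hg0 q]; exact hg1 q]
        _ = B := one_mul B
    · exact hg.mul hcm
  have iBfc : Integrable (fun q => f q * c q) μ := by
    apply integrable_of_bdd' μ _ B
    · intro q
      have := hcb q
      calc |f q * c q| = |f q| * |c q| := abs_mul _ _
        _ ≤ 1 * B := by
            apply mul_le_mul _ this (abs_nonneg _) zero_le_one
            rw [abs_le]; constructor <;> [linarith [hf0 q]; exact hf1 q]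
        _ = B := one_mul B
    · exact hfm.mul hcm
  have iD : Integrable (fun q => (g q - f q) * c q) μ := by
    have : (fun q => (g q - f q) * c q) = fun q => g q * c q - f q * c q := by
      funext q; ring
    rw [this]; exact iBgc.sub iBfc
  -- risk difference
  have hriskdiff : risk g - risk f = ∫ q, (g q - f q) * (1 - 2 * eta q) ∂μ := by
    rw [hrisk g, hrisk f, ← integral_sub ieg ief]
    congr 1; funext q; ring
  -- DDP difference
  have hDDPdiff : DDP g - DDP f = ∫ q, (g q - f q) * c q ∂μ := by
    rw [hDDP g, hDDP f, ← integral_sub iBgc iBfc]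
    congr 1; funext q; ring
  -- pointwise nonnegativity of the Lagrangian integrand
  have hpt : ∀ q : X × Bool, 0 ≤ (g q - f q) * (1 - 2 * eta q) + s * ((g q - f q) * c q) := by
    rintro ⟨x, a⟩
    have hpa : p a ≠ 0 := (hp a).ne'
    obtain ⟨v, hv⟩ : ∃ v : ℝ, (if a = true then (1:ℝ) else -1) = v := ⟨_, rfl⟩
    have hca : c (x, a) = v / p a := by simp only [hc]; rw [hv]
    have hea : eta (x, a) = η a x := rfl
    have hkey : (g (x,a) - f (x,a)) * (1 - 2 * eta (x,a)) + s * ((g (x,a) - f (x,a)) * c (x,a))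
        = (g (x,a) - f (x,a)) * (2 * ((1/2 + v * s / (2 * p a)) - η a x)) := by
      rw [hca, hea]
      field_simp
      ring
    rw [hkey]
    set t : ℝ := 1/2 + v * s / (2 * p a) with ht
    rcases lt_trichotomy (η a x) t with hlt | heq | hgt
    · have hf : f (x, a) = 0 := by
        rw [hfdef x a, hv, ← ht, if_neg (not_lt.2 hlt.le), if_neg hlt.ne]
      rw [hf, sub_zero]
      exact mul_nonneg (hg0 _) (by linarith)
    · rw [heq]; simp
    · have hf : f (x, a) = 1 := by
        rw [hfdef x a, hv, ← ht, if_pos hgt]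
      rw [hf]
      have h1 : g (x, a) - 1 ≤ 0 := by linarith [hg1 (x, a)]
      have h2 : 2 * (t - η a x) ≤ 0 := by linarith
      have := mul_nonneg (neg_nonneg.2 h1) (neg_nonneg.2 h2)
      rw [neg_mul_neg] at this
      exact this
  -- integrate
  have hint : 0 ≤ ∫ q, ((g q - f q) * (1 - 2 * eta q) + s * ((g q - f q) * c q)) ∂μ :=
    integral_nonneg hpt
  rw [integral_add iA (iD.const_mul s), integral_const_mul] at hint
  rw [← hriskdiff, ← hDDPdiff] at hint
  have hd1 : 0 ≤ s * (DDP f - DDP g) :=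
    mul_nonneg hs (by rw [hfddp]; linarith)
  have hd2 : s * (DDP g - DDP f) = -(s * (DDP f - DDP g)) := by ring
  linarith
end

section
/- Fair cost-sensitive Bayes-optimal classifier under demographic parity: With c ∈ (0,1), δ ≥ 0, A ∈ {0,1}, p_a = P(A=a) > 0, and assuming η_a(X) atomless under P_{X|A=a} for a ∈ {0,1}: if t ∈ ℝ is such that the deterministic classifier f_t(x,a) = 1{η_a(x) > c + (2a−1)t/p_a} satisfies DDP(f_t) = δ and t·δ ≥ 0 in sign conventions (i.e., t has the same sign as the unconstrained disparity), then f_t minimizes the cost-sensitive risk R_c among all randomized classifiers g with |DDP(g)| ≤ δ and DDP(g) of the same sign. -/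
open MeasureTheory Set

theorem stmt_13 {X : Type*} [MeasurableSpace X]
    (μ : Measure (X × Bool)) [IsProbabilityMeasure μ]
    (η : Bool → X → ℝ) (hη : ∀ a, Measurable (η a))
    (hη0 : ∀ a x, 0 ≤ η a x) (hη1 : ∀ a x, η a x ≤ 1)
    (p : Bool → ℝ) (hp : ∀ a, 0 < p a)
    (hpdef : ∀ a, p a = (μ {q : X × Bool | q.2 = a}).toReal)
    (hatomless : ∀ (a : Bool) (u : ℝ), μ {q : X × Bool | q.2 = a ∧ η a q.1 = u} = 0)
    (c : ℝ) (hc0 : 0 < c) (hc1 : c < 1)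
    (riskc DDP : (X × Bool → ℝ) → ℝ)
    (hrisk : ∀ g : X × Bool → ℝ,
      riskc g = ∫ q, (c * g q * (1 - η q.2 q.1) + (1 - c) * (1 - g q) * η q.2 q.1) ∂μ)
    (hDDP : ∀ g : X × Bool → ℝ,
      DDP g = ∫ q, g q * ((if q.2 then (1:ℝ) else -1) / p q.2) ∂μ)
    (δ t : ℝ)
    (ft : X × Bool → ℝ)
    (hft : ∀ (x : X) (a : Bool), ft (x, a) =
      if η a x > c + (if a then (1:ℝ) else -1) * t / p a then 1 else 0)
    (hftddp : DDP ft = δ) (hsign : 0 ≤ t * δ) :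
    ∀ g : X × Bool → ℝ, Measurable g → (∀ q, 0 ≤ g q) → (∀ q, g q ≤ 1) →
      |DDP g| ≤ |δ| → 0 ≤ DDP g * δ → riskc ft ≤ riskc g := by
  intro g hg hg0 hg1 hgd hgs
  -- notation
  have hft' : ∀ q : X × Bool, ft q =
      if η q.2 q.1 > c + (if q.2 then (1:ℝ) else -1) * t / p q.2 then 1 else 0 :=
    fun q => hft q.1 q.2
  have hft0 : ∀ q, 0 ≤ ft q := by
    intro q; rw [hft' q]; split_ifs <;> norm_num
  have hft1 : ∀ q, ft q ≤ 1 := by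
    intro q; rw [hft' q]; split_ifs <;> norm_num
  -- measurability
  have hEm : Measurable (fun q : X × Bool => η q.2 q.1) := by
    have h1 : (fun q : X × Bool => η q.2 q.1)
        = fun q : X × Bool => if q.2 = true then η true q.1 else η false q.1 := by
      funext q; cases hq : q.2 <;> simp [hq]
    rw [h1]
    exact Measurable.ite (measurable_snd (measurableSet_singleton true))
      ((hη true).comp measurable_fst) ((hη false).comp measurable_fst)
  have hthm : Measurable (fun q : X × Bool => c + (if q.2 then (1:ℝ) else -1) * t / p q.2) :=
    (measurable_of_countable fun a : Bool => c + (if a then (1:ℝ) else -1) * t / p a).comp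
      measurable_snd
  have hwm : Measurable (fun q : X × Bool => (if q.2 then (1:ℝ) else -1) / p q.2) :=
    (measurable_of_countable fun a : Bool => (if a then (1:ℝ) else -1) / p a).comp
      measurable_snd
  have hftm : Measurable ft := by
    have h1 : ft = fun q : X × Bool =>
        if c + (if q.2 then (1:ℝ) else -1) * t / p q.2 < η q.2 q.1 then (1:ℝ) else 0 :=
      funext hft'
    rw [h1]
    exact Measurable.ite (measurableSet_lt hthm hEm) measurable_const measurable_const
  -- integrability helper
  have bdd : ∀ (f : X × Bool → ℝ) (C : ℝ), Measurable f → (∀ q, |f q| ≤ C) →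
      Integrable f μ := fun f C hf hC =>
    (integrable_const C).mono' hf.aestronglyMeasurable
      (ae_of_all _ fun q => by simpa [Real.norm_eq_abs] using hC q)
  have hwbd : ∀ q : X × Bool, |(if q.2 then (1:ℝ) else -1) / p q.2| ≤ (p true)⁻¹ + (p false)⁻¹ := by
    intro q
    have h0 := hp true; have h1 := hp false
    have h0' := inv_pos.mpr h0; have h1' := inv_pos.mpr h1
    cases hq : q.2
    · have he : ((if false = true then (1:ℝ) else -1) / p false) = -(p false)⁻¹ := by
        norm_num [div_eq_mul_inv]
      rw [he, abs_neg, abs_of_pos h1']; linarith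
    · have he : ((if true = true then (1:ℝ) else -1) / p true) = (p true)⁻¹ := by
        norm_num [div_eq_mul_inv]
      rw [he, abs_of_pos h0']; linarith
  -- integrable pieces
  have intR : ∀ h : X × Bool → ℝ, Measurable h → (∀ q, 0 ≤ h q) → (∀ q, h q ≤ 1) →
      Integrable (fun q => c * h q * (1 - η q.2 q.1) + (1 - c) * (1 - h q) * η q.2 q.1) μ := by
    intro h hm h0 h1
    refine bdd _ 1 ?_ ?_
    · exact ((measurable_const.mul hm).mul (measurable_const.sub hEm)).add
        ((measurable_const.mul (measurable_const.sub hm)).mul hEm)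
    · intro q
      have e0 := hη0 q.2 q.1; have e1 := hη1 q.2 q.1
      have := h0 q; have := h1 q
      rw [abs_le]
      constructor <;> nlinarith [mul_nonneg (h0 q) (sub_nonneg.2 e1),
        mul_nonneg (sub_nonneg.2 (h1 q)) e0,
        mul_nonneg (sub_nonneg.2 (h1 q)) (sub_nonneg.2 e1),
        mul_nonneg (h0 q) e0]
  have intA : Integrable (fun q : X × Bool => (ft q - g q) * (η q.2 q.1 - c)) μ := by
    refine bdd _ 2 ((hftm.sub hg).mul (hEm.sub measurable_const)) ?_
    intro q
    have e0 := hη0 q.2 q.1; have e1 := hη1 q.2 q.1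
    have := hg0 q; have := hg1 q; have := hft0 q; have := hft1 q
    rw [abs_le]; constructor <;> nlinarith [abs_nonneg (ft q - g q)]
  have intftw : Integrable (fun q : X × Bool => ft q * ((if q.2 then (1:ℝ) else -1) / p q.2)) μ := by
    refine bdd _ ((p true)⁻¹ + (p false)⁻¹) (hftm.mul hwm) ?_
    intro q
    rw [abs_mul]
    calc |ft q| * |(if q.2 then (1:ℝ) else -1) / p q.2|
        ≤ 1 * |(if q.2 then (1:ℝ) else -1) / p q.2| := by
          apply mul_le_mul_of_nonneg_right _ (abs_nonneg _)
          rw [abs_le]; exact ⟨by linarith [hft0 q], hft1 q⟩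
      _ ≤ (p true)⁻¹ + (p false)⁻¹ := by rw [one_mul]; exact hwbd q
  have intgw : Integrable (fun q : X × Bool => g q * ((if q.2 then (1:ℝ) else -1) / p q.2)) μ := by
    refine bdd _ ((p true)⁻¹ + (p false)⁻¹) (hg.mul hwm) ?_
    intro q
    rw [abs_mul]
    calc |g q| * |(if q.2 then (1:ℝ) else -1) / p q.2|
        ≤ 1 * |(if q.2 then (1:ℝ) else -1) / p q.2| := by
          apply mul_le_mul_of_nonneg_right _ (abs_nonneg _)
          rw [abs_le]; exact ⟨by linarith [hg0 q], hg1 q⟩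
      _ ≤ (p true)⁻¹ + (p false)⁻¹ := by rw [one_mul]; exact hwbd q
  have intB : Integrable (fun q : X × Bool => (ft q - g q) * ((if q.2 then (1:ℝ) else -1) / p q.2)) μ := by
    have h1 : (fun q : X × Bool => (ft q - g q) * ((if q.2 then (1:ℝ) else -1) / p q.2))
        = fun q => ft q * ((if q.2 then (1:ℝ) else -1) / p q.2)
            - g q * ((if q.2 then (1:ℝ) else -1) / p q.2) := by
      funext q; ring
    rw [h1]; exact intftw.sub intgw
  -- risk difference
  have riskdiff : riskc g - riskc ft = ∫ q, (ft q - g q) * (η q.2 q.1 - c) ∂μ := by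
    rw [hrisk g, hrisk ft, ← integral_sub (intR g hg hg0 hg1) (intR ft hftm hft0 hft1)]
    congr 1; funext q; ring
  -- DDP difference
  have hB : ∫ q, (ft q - g q) * ((if q.2 then (1:ℝ) else -1) / p q.2) ∂μ = δ - DDP g := by
    have h1 : (fun q : X × Bool => (ft q - g q) * ((if q.2 then (1:ℝ) else -1) / p q.2))
        = fun q => ft q * ((if q.2 then (1:ℝ) else -1) / p q.2)
            - g q * ((if q.2 then (1:ℝ) else -1) / p q.2) := by
      funext q; ring
    rw [h1, integral_sub intftw intgw, ← hDDP ft, ← hDDP g, hftddp]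
  -- pointwise nonnegativity of D
  have hDpt : ∀ q : X × Bool,
      0 ≤ (ft q - g q) * (η q.2 q.1 - (c + (if q.2 then (1:ℝ) else -1) * t / p q.2)) := by
    intro q
    by_cases h : η q.2 q.1 > c + (if q.2 then (1:ℝ) else -1) * t / p q.2
    · have : ft q = 1 := by rw [hft' q, if_pos h]
      rw [this]
      exact mul_nonneg (by linarith [hg1 q]) (by linarith)
    · have : ft q = 0 := by rw [hft' q, if_neg h]
      rw [this]
      push_neg at h
      nlinarith [hg0 q]
  -- ∫ D ≥ 0 and D = A - t·B
  have hID : 0 ≤ ∫ q, (ft q - g q) * (η q.2 q.1 - c) ∂μ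
      - t * ∫ q, (ft q - g q) * ((if q.2 then (1:ℝ) else -1) / p q.2) ∂μ := by
    have h1 : ∫ q, (ft q - g q) * (η q.2 q.1 - c) ∂μ
        - t * ∫ q, (ft q - g q) * ((if q.2 then (1:ℝ) else -1) / p q.2) ∂μ
        = ∫ q, ((ft q - g q) * (η q.2 q.1 - c)
            - t * ((ft q - g q) * ((if q.2 then (1:ℝ) else -1) / p q.2))) ∂μ := by
      rw [integral_sub intA (intB.const_mul t), integral_const_mul]
    rw [h1]
    refine integral_nonneg fun q => ?_
    have h2 : (ft q - g q) * (η q.2 q.1 - c)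
        - t * ((ft q - g q) * ((if q.2 then (1:ℝ) else -1) / p q.2))
        = (ft q - g q) * (η q.2 q.1 - (c + (if q.2 then (1:ℝ) else -1) * t / p q.2)) := by
      ring
    show (0:ℝ) ≤ (ft q - g q) * (η q.2 q.1 - c)
        - t * ((ft q - g q) * ((if q.2 then (1:ℝ) else -1) / p q.2))
    rw [h2]; exact hDpt q
  -- sign argument
  have hkey : 0 ≤ t * (δ - DDP g) := by
    rcases lt_trichotomy δ 0 with h | h | h
    · have ht : t ≤ 0 := by nlinarith
      have hd : δ ≤ DDP g := by
        have := neg_abs_le (DDP g)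
        have := abs_of_neg h
        nlinarith [neg_abs_le (DDP g)]
      have hd' : δ - DDP g ≤ 0 := by linarith
      nlinarith
    · have : DDP g = 0 := by
        have : |DDP g| ≤ 0 := by simpa [h] using hgd
        simpa [abs_nonpos_iff] using this
      simp [h, this]
    · have ht : 0 ≤ t := by nlinarith
      have hd : DDP g ≤ δ := by
        have := le_abs_self (DDP g)
        have := abs_of_pos h
        linarith [le_abs_self (DDP g)]
      exact mul_nonneg ht (by linarith)
  rw [hB] at hID
  linarith [riskdiff, hID, hkey]
end

section
/- If for each a ∈ {0,1} the random variable η_a(X) under P_{X|A=a} is atomless, then the map t ↦ DDP(f_t), where f_t(x,a) = 1{η_a(x) > 1/2 + (2a−1)t/(2p_a)}, is continuous on ℝ, monotone non-increasing, and attains every value between lim_{t→+∞} DDP(f_t) and lim_{t→−∞} DDP(f_t); in particular, for any δ with |δ| ≤ |DDP(f_0)| and δ·DDP(f_0) ≥ 0, there exists t* with DDP(f_{t*}) = δ. -/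
open MeasureTheory Set

open ProbabilityTheory in
lemma survival_continuous_antitone {X : Type*} [MeasurableSpace X]
    (μ : Measure X) [IsProbabilityMeasure μ] (η : X → ℝ) (hη : Measurable η)
    (h : ∀ u, μ {x | η x = u} = 0) :
    Continuous (fun c => (μ {x | η x > c}).toReal) ∧
      Antitone (fun c => (μ {x | η x > c}).toReal) := by
  set μ' := μ.map η with hμ'
  have : IsProbabilityMeasure μ' := Measure.isProbabilityMeasure_map hη.aemeasurable
  have hsing : ∀ u : ℝ, μ' {u} = 0 := by
    intro u
    rw [hμ', Measure.map_apply hη (measurableSet_singleton u)]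
    exact h u
  have hcont : Continuous (cdf μ') := by
    rw [continuous_iff_continuousAt]
    intro x
    rw [(monotone_cdf μ').continuousAt_iff_leftLim_eq_rightLim,
      StieltjesFunction.rightLim_eq]
    have hle : Function.leftLim (cdf μ') x ≤ cdf μ' x :=
      (monotone_cdf μ').leftLim_le le_rfl
    have h0 : (cdf μ').measure {x} = 0 := by rw [measure_cdf]; exact hsing x
    rw [StieltjesFunction.measure_singleton] at h0
    have := ENNReal.ofReal_eq_zero.mp h0
    linarith
  have hkey : ∀ c, (μ {x | η x > c}).toReal = 1 - cdf μ' c := by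
    intro c
    have hmap : μ' (Set.Ioi c) = μ {x | η x > c} := by
      rw [hμ', Measure.map_apply hη measurableSet_Ioi]; rfl
    have hcompl : μ' (Set.Ioi c) = 1 - μ' (Set.Iic c) := by
      rw [← Set.compl_Iic, measure_compl measurableSet_Iic (measure_ne_top _ _),
        measure_univ]
    rw [← hmap, hcompl, cdf_eq_real, measureReal_def,
      ENNReal.toReal_sub_of_le (prob_le_one) (by simp), ENNReal.toReal_one]
  constructor
  · have : (fun c => (μ {x | η x > c}).toReal) = fun c => 1 - cdf μ' c := by
      funext c; exact hkey c
    rw [this]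
    exact continuous_const.sub hcont
  · intro c c' hcc'
    apply ENNReal.toReal_mono (measure_ne_top _ _)
    exact measure_mono (fun x hx => lt_of_le_of_lt hcc' hx)

theorem stmt_17 {X : Type*} [MeasurableSpace X]
    (ν : Bool → Measure X) [∀ a, IsProbabilityMeasure (ν a)]
    (η : Bool → X → ℝ) (hη : ∀ a, Measurable (η a))
    (hη0 : ∀ a x, 0 ≤ η a x) (hη1 : ∀ a x, η a x ≤ 1)
    (p : Bool → ℝ) (hp : ∀ a, 0 < p a)
    (hatomless : ∀ (a : Bool) (u : ℝ), ν a {x | η a x = u} = 0)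
    (D : ℝ → ℝ)
    (hD : ∀ t, D t = (ν true {x | η true x > 1/2 + t / (2 * p true)}).toReal -
      (ν false {x | η false x > 1/2 - t / (2 * p false)}).toReal) :
    Continuous D ∧ Antitone D ∧
      ∀ δ : ℝ, |δ| ≤ |D 0| → 0 ≤ δ * D 0 → ∃ tstar : ℝ, D tstar = δ := by
  obtain ⟨hc1, ha1⟩ := survival_continuous_antitone (ν true) (η true) (hη true)
    (hatomless true)
  obtain ⟨hc0, ha0⟩ := survival_continuous_antitone (ν false) (η false) (hη false)
    (hatomless false)
  set S1 : ℝ → ℝ := fun c => (ν true {x | η true x > c}).toReal with hS1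
  set S0 : ℝ → ℝ := fun c => (ν false {x | η false x > c}).toReal with hS0
  have hDeq : D = fun t => S1 (1/2 + t / (2 * p true)) - S0 (1/2 - t / (2 * p false)) := by
    funext t; rw [hD t]
  have hcontD : Continuous D := by
    rw [hDeq]
    exact (hc1.comp (by continuity)).sub (hc0.comp (by continuity))
  have hantiD : Antitone D := by
    intro t t' htt'
    rw [hDeq]
    have h1 : S1 (1/2 + t' / (2 * p true)) ≤ S1 (1/2 + t / (2 * p true)) := by
      apply ha1
      have := hp true
      gcongr
    have h0 : S0 (1/2 - t / (2 * p false)) ≤ S0 (1/2 - t' / (2 * p false)) := by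
      apply ha0
      have := hp false
      gcongr
    simp only
    linarith
  refine ⟨hcontD, hantiD, ?_⟩
  -- endpoint values
  set T : ℝ := max (p true) (p false) with hT
  have hTpos : 0 < T := lt_of_lt_of_le (hp true) (le_max_left _ _)
  have hempty : ∀ (a : Bool) (c : ℝ), 1 ≤ c → (ν a {x | η a x > c}).toReal = 0 := by
    intro a c hc
    have : {x | η a x > c} = ∅ := by
      ext x; simp only [Set.mem_setOf_eq, Set.mem_empty_iff_false, iff_false, not_lt]
      exact le_trans (hη1 a x) hc
    rw [this]; simp
  have hfull : ∀ (a : Bool) (c : ℝ), c ≤ 0 → (ν a {x | η a x > c}).toReal = 1 := by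
    intro a c hc
    have hsub : {x | η a x > c}ᶜ ⊆ {x | η a x = 0} := by
      intro x hx
      simp only [Set.mem_compl_iff, Set.mem_setOf_eq, not_lt] at hx ⊢
      exact le_antisymm (le_trans hx hc) (hη0 a x)
    have h0 : ν a {x | η a x > c}ᶜ = 0 :=
      measure_mono_null hsub (hatomless a 0)
    have : ν a {x | η a x > c} = 1 := by
      have hm : MeasurableSet {x | η a x > c} := measurableSet_lt measurable_const (hη a)
      have := measure_compl hm (measure_ne_top (ν a) _)
      rw [h0, measure_univ] at this
      exact le_antisymm prob_le_one (tsub_eq_zero_iff_le.mp this.symm)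
    rw [this]; simp
  have hbT : 1 ≤ 1/2 + T / (2 * p true) := by
    have h1 : p true ≤ T := le_max_left _ _
    have h2 : (0:ℝ) < 2 * p true := by linarith [hp true]
    have h3 : (1:ℝ)/2 ≤ T / (2 * p true) := by rw [le_div_iff₀ h2]; linarith
    linarith
  have hbT0 : 1/2 - T / (2 * p false) ≤ 0 := by
    have h1 : p false ≤ T := le_max_right _ _
    have h2 : (0:ℝ) < 2 * p false := by linarith [hp false]
    rw [sub_nonpos, le_div_iff₀ h2]
    linarith
  have hDT : D T = -1 := by
    rw [hD T, hempty true _ hbT, hfull false _ hbT0]; ring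
  have hbnT : 1/2 + (-T) / (2 * p true) ≤ 0 := by
    have h1 : p true ≤ T := le_max_left _ _
    have h2 : (0:ℝ) < 2 * p true := by linarith [hp true]
    rw [← sub_nonpos] at *
    have : (-T) / (2 * p true) ≤ -1/2 := by
      rw [div_le_iff₀ h2]; linarith
    linarith
  have hbnT0 : 1 ≤ 1/2 - (-T) / (2 * p false) := by
    have h1 : p false ≤ T := le_max_right _ _
    have h2 : (0:ℝ) < 2 * p false := by linarith [hp false]
    have : 1/2 ≤ -((-T) / (2 * p false)) := by
      rw [neg_div, neg_neg, le_div_iff₀ h2]; linarith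
    linarith
  have hDnT : D (-T) = 1 := by
    rw [hD (-T), hfull true _ hbnT, hempty false _ hbnT0]; ring
  intro δ hδabs _
  have hD0mem : -1 ≤ D 0 ∧ D 0 ≤ 1 := by
    constructor
    · rw [← hDT]; exact hantiD (le_of_lt hTpos)
    · rw [← hDnT]; exact hantiD (by linarith)
  have hδ : δ ∈ Set.Icc (-1 : ℝ) 1 := by
    have h1 : |D 0| ≤ 1 := abs_le.mpr hD0mem
    have := le_trans hδabs h1
    exact abs_le.mp this
  have hIVT := intermediate_value_Icc' (a := -T) (b := T) (by linarith)
    (hcontD.continuousOn)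
  rw [hDT, hDnT] at hIVT
  obtain ⟨tstar, _, htstar⟩ := hIVT hδ
  exact ⟨tstar, htstar⟩
end
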